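/- arXiv:2206.10438 — 4 statements merged into one kernel-verified Lean document; each statement's English description precedes it below -/
import Mathlib

section
/- Let σ ≥ 0 and let Σ : [0,T] → End(ℝⁿ) be continuous with ‖Σ(t)‖ ≤ σ for all t, and let ξ : [0,T] → ℝⁿ be continuous with |ξ(t)| ≤ Σᵢ κᵢ e^{λᵢ t} for finitely many constants κᵢ ≥ 0 and λᵢ > σ. If χ : [0,T] → ℝⁿ is a C¹ solution of χ'(t) = Σ(t)χ(t) + ξ(t), then for all t ∈ [0,T]: |χ(t)| ≤ |χ(0)| e^{σ t} + Σᵢ (λᵢ − σ)⁻¹ κᵢ e^{λᵢ t}. -/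
open Real Set

/-- A Gronwall-type bound for the linear ODE system `χ' = Σ(t) χ + ξ(t)` on
`[0,T]`, where `‖Σ(t)‖ ≤ σ` and the inhomogeneity is bounded by a finite sum of exponentials
`∑ᵢ κᵢ e^{λᵢ t}` with rates `λᵢ > σ`. -/
theorem stmt_0 {n : ℕ} {ι : Type} [Fintype ι] (T σ : ℝ) (hσ : 0 ≤ σ) (hT : 0 ≤ T)
    (κ lam : ι → ℝ) (hκ : ∀ i, 0 ≤ κ i) (hlam : ∀ i, σ < lam i)
    (S : ℝ → (EuclideanSpace ℝ (Fin n) →L[ℝ] EuclideanSpace ℝ (Fin n)))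
    (ξ χ : ℝ → EuclideanSpace ℝ (Fin n))
    (hScont : ContinuousOn S (Icc 0 T))
    (hSle : ∀ t ∈ Icc (0 : ℝ) T, ‖S t‖ ≤ σ)
    (hξcont : ContinuousOn ξ (Icc 0 T))
    (hξle : ∀ t ∈ Icc (0 : ℝ) T, ‖ξ t‖ ≤ ∑ i, κ i * exp (lam i * t))
    (hode : ∀ t ∈ Icc (0 : ℝ) T, HasDerivAt χ (S t (χ t) + ξ t) t) :
    ∀ t ∈ Icc (0 : ℝ) T,
      ‖χ t‖ ≤ ‖χ 0‖ * exp (σ * t) + ∑ i, (lam i - σ)⁻¹ * κ i * exp (lam i * t) := by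
  set B : ℝ → ℝ := fun t => ‖χ 0‖ * exp (σ * t) + ∑ i, (lam i - σ)⁻¹ * κ i * exp (lam i * t)
    with hBdef
  have hχcont : ContinuousOn χ (Icc 0 T) := fun t ht =>
    (hode t ht).continuousAt.continuousWithinAt
  have key : ∀ ε > 0, ∀ t ∈ Icc (0 : ℝ) T, ‖χ t‖ ≤ B t + ε * exp ((σ + 1) * t) := by
    intro ε hε
    set Bε : ℝ → ℝ := fun t => B t + ε * exp ((σ + 1) * t) with hBεdef
    set Bε' : ℝ → ℝ := fun t =>
      σ * (‖χ 0‖ * exp (σ * t)) + ∑ i, (lam i - σ)⁻¹ * κ i * (lam i * exp (lam i * t))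
        + ε * ((σ + 1) * exp ((σ + 1) * t)) with hBε'def
    have hBder : ∀ t : ℝ, HasDerivAt Bε (Bε' t) t := by
      intro t
      apply HasDerivAt.add
      · apply HasDerivAt.add
        · simpa [mul_comm, mul_assoc, mul_left_comm] using
            ((hasDerivAt_id t).const_mul σ).exp.const_mul (‖χ 0‖)
        · apply HasDerivAt.fun_sum
          intro i _
          simpa [mul_comm, mul_assoc, mul_left_comm] using
            ((hasDerivAt_id t).const_mul (lam i)).exp.const_mul ((lam i - σ)⁻¹ * κ i)
      · simpa [mul_comm, mul_assoc, mul_left_comm] using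
          ((hasDerivAt_id t).const_mul (σ + 1)).exp.const_mul ε
    have main : ∀ ⦃t⦄, t ∈ Icc (0 : ℝ) T → ‖χ t‖ ≤ Bε t := by
      apply image_le_of_liminf_slope_right_lt_deriv_boundary
        (f := fun t => ‖χ t‖) (f' := fun t => ‖S t (χ t) + ξ t‖)
        (continuous_norm.comp_continuousOn hχcont)
      · intro x hx r hr
        exact ((hode x (Ico_subset_Icc_self hx)).hasDerivWithinAt.liminf_right_slope_norm_le
          hr).mono (fun z hz => by rwa [slope_def_field, div_eq_inv_mul])
      · have h0 : (0:ℝ) ≤ T := hT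
        have : B 0 = ‖χ 0‖ + ∑ i, (lam i - σ)⁻¹ * κ i := by simp [hBdef]
        have hsum : 0 ≤ ∑ i, (lam i - σ)⁻¹ * κ i :=
          Finset.sum_nonneg fun i _ =>
            mul_nonneg (inv_nonneg.2 (sub_nonneg.2 (hlam i).le)) (hκ i)
        simp only [hBεdef, this, mul_zero, exp_zero, mul_one]
        linarith
      · exact hBder
      · intro x hx hfx
        have hxI : x ∈ Icc (0:ℝ) T := Ico_subset_Icc_self hx
        have h1 : ‖S x (χ x) + ξ x‖ ≤ σ * ‖χ x‖ + ∑ i, κ i * exp (lam i * x) := by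
          calc ‖S x (χ x) + ξ x‖ ≤ ‖S x (χ x)‖ + ‖ξ x‖ := norm_add_le _ _
            _ ≤ σ * ‖χ x‖ + ∑ i, κ i * exp (lam i * x) := by
                gcongr
                · calc ‖S x (χ x)‖ ≤ ‖S x‖ * ‖χ x‖ := (S x).le_opNorm _
                    _ ≤ σ * ‖χ x‖ := by
                        exact mul_le_mul_of_nonneg_right (hSle x hxI) (norm_nonneg _)
                · exact hξle x hxI
        rw [hfx] at h1
        refine lt_of_le_of_lt h1 ?_
        have hexp : 0 < exp ((σ + 1) * x) := exp_pos _
        have hsum_eq : ∀ i : ι, σ * ((lam i - σ)⁻¹ * κ i * exp (lam i * x)) + κ i * exp (lam i * x)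
            = (lam i - σ)⁻¹ * κ i * (lam i * exp (lam i * x)) := by
          intro i
          have h : lam i - σ ≠ 0 := ne_of_gt (sub_pos.2 (hlam i))
          field_simp
          ring
        simp only [hBεdef, hBdef, hBε'def, mul_add, Finset.mul_sum]
        have : ∑ i, σ * ((lam i - σ)⁻¹ * κ i * exp (lam i * x)) + ∑ i, κ i * exp (lam i * x)
            = ∑ i, (lam i - σ)⁻¹ * κ i * (lam i * exp (lam i * x)) := by
          rw [← Finset.sum_add_distrib]
          exact Finset.sum_congr rfl fun i _ => hsum_eq i
        nlinarith [this, exp_pos ((σ + 1) * x), hε, hσ]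
    exact fun t ht => main ht
  intro t ht
  show ‖χ t‖ ≤ B t
  refine le_of_forall_pos_le_add fun η hη => ?_
  have hε : 0 < η / exp ((σ + 1) * t) := div_pos hη (exp_pos _)
  calc ‖χ t‖ ≤ B t + η / exp ((σ + 1) * t) * exp ((σ + 1) * t) := key _ hε t ht
    _ = B t + η := by rw [div_mul_cancel₀]; exact (exp_pos _).ne'
end

section
/- Let Q(X) = (X−λ₁)(X−λ₂) with distinct real roots λ₁ ≠ λ₂, let a ∈ ℝ, and let ψ : [0,∞) → [0,∞) be integrable. If y : [0,∞) → ℝ is a C² solution of y'' − (λ₁+λ₂) y' + λ₁λ₂ y = u, where |u(r)| ≤ e^{a r} ψ(r) for all r, then there exist A₁, A₂ ∈ ℝ and a constant C = C(λ₁, λ₂, a) such that |y(r) − A₁ e^{λ₁ r} − A₂ e^{λ₂ r}| ≤ C ‖ψ‖_{L¹([0,∞))} e^{a r} for all r ≥ 0. -/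
open Real Set MeasureTheory


lemma first_order_rep (l : ℝ) (v v' f : ℝ → ℝ)
    (hv : ∀ r ∈ Ici (0:ℝ), HasDerivWithinAt v (v' r) (Ici 0) r)
    (hf : ContinuousOn f (Ici 0))
    (heq : ∀ r ∈ Ici (0:ℝ), v' r - l * v r = f r) :
    ∀ r ∈ Ici (0:ℝ), v r = exp (l * r) * (v 0 + ∫ s in (0:ℝ)..r, exp (-(l * s)) * f s) := by
  intro r hr
  have hvc : ContinuousOn v (Ici 0) := fun x hx => (hv x hx).continuousWithinAt
  have key : (∫ s in (0:ℝ)..r, exp (-(l * s)) * f s)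
      = exp (-(l * r)) * v r - exp (-(l * 0)) * v 0 := by
    apply intervalIntegral.integral_eq_sub_of_hasDeriv_right_of_le hr
    · exact ((Real.continuous_exp.comp (continuous_const.mul continuous_id).neg).continuousOn.mul
        hvc).mono (Icc_subset_Ici_self)
    · intro x hx
      have hx0 : x ∈ Ici (0:ℝ) := le_of_lt hx.1
      have he : HasDerivAt (fun s : ℝ => exp (-(l * s))) (exp (-(l * x)) * (-(l * 1))) x :=
        (((hasDerivAt_id x).const_mul l).neg).exp
      have h1 : HasDerivWithinAt (fun s => exp (-(l * s)) * v s)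
          (exp (-(l * x)) * (-(l * 1)) * v x + exp (-(l * x)) * v' x) (Ici 0) x :=
        he.hasDerivWithinAt.mul (hv x hx0)
      have h2 := h1.mono (Ioi_subset_Ici hx.1.le)
      convert h2 using 1
      have := heq x hx0
      linear_combination (-(exp (-(l * x)))) * this
    · apply ContinuousOn.intervalIntegrable
      apply ((Real.continuous_exp.comp (continuous_const.mul continuous_id).neg).continuousOn.mul
        hf).mono
      rw [uIcc_of_le hr]
      exact Icc_subset_Ici_self
  rw [key]
  have h1 : exp (l * r) * exp (-(l * r)) = 1 := by rw [← exp_add]; simp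
  simp only [mul_zero, neg_zero, exp_zero, one_mul]
  linear_combination (-(v r)) * h1


lemma tail_est (l a : ℝ) (ψ u : ℝ → ℝ) (hψ0 : ∀ r, 0 ≤ ψ r)
    (hψ : IntegrableOn ψ (Ici 0)) (hu : ContinuousOn u (Ici 0))
    (hub : ∀ r ∈ Ici (0:ℝ), |u r| ≤ exp (a * r) * ψ r) :
    ∃ c : ℝ, ∀ r ∈ Ici (0:ℝ),
      |(∫ s in (0:ℝ)..r, exp (-(l * s)) * u s) - c|
        ≤ exp ((a - l) * r) * ∫ s in Ici (0:ℝ), ψ s := by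
  have hg : ∀ s ∈ Ici (0:ℝ), |exp (-(l * s)) * u s| ≤ exp ((a - l) * s) * ψ s := by
    intro s hs
    rw [abs_mul, abs_of_pos (exp_pos _)]
    calc exp (-(l * s)) * |u s| ≤ exp (-(l * s)) * (exp (a * s) * ψ s) :=
          mul_le_mul_of_nonneg_left (hub s hs) (exp_pos _).le
      _ = exp ((a - l) * s) * ψ s := by rw [← mul_assoc, ← exp_add]; ring_nf
  have hgm : AEStronglyMeasurable (fun s => exp (-(l * s)) * u s) (volume.restrict (Ici 0)) :=
    (((Real.continuous_exp.comp (continuous_const.mul continuous_id).neg).continuousOn.mul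
      hu)).aestronglyMeasurable measurableSet_Ici
  rcases le_or_gt l a with hla | hal
  · -- c = 0
    refine ⟨0, fun r hr => ?_⟩
    rw [sub_zero]
    have hb : ∀ t ∈ Ioc (0:ℝ) r, ‖exp (-(l * t)) * u t‖ ≤ exp ((a - l) * r) * ψ t := by
      intro t ht
      calc ‖exp (-(l * t)) * u t‖ ≤ exp ((a - l) * t) * ψ t := hg t ht.1.le
        _ ≤ exp ((a - l) * r) * ψ t :=
          mul_le_mul_of_nonneg_right (exp_le_exp.2 (by nlinarith [ht.2, sub_nonneg.2 hla])) (hψ0 t)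
    have hbint : IntervalIntegrable (fun t => exp ((a - l) * r) * ψ t) volume 0 r := by
      rw [intervalIntegrable_iff, uIoc_of_le hr]
      exact (hψ.mono_set (fun x hx => hx.1.le)).const_mul _
    have h1 : |∫ s in (0:ℝ)..r, exp (-(l * s)) * u s| ≤
        ∫ t in (0:ℝ)..r, exp ((a - l) * r) * ψ t := by
      rw [← Real.norm_eq_abs]
      refine le_trans (intervalIntegral.norm_integral_le_of_norm_le hr ?_ hbint) (le_of_eq ?_)
      · exact Filter.Eventually.of_forall hb
      · rfl
    refine h1.trans ?_
    rw [intervalIntegral.integral_const_mul]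
    apply mul_le_mul_of_nonneg_left _ (exp_pos _).le
    rw [intervalIntegral.integral_of_le hr]
    exact setIntegral_mono_set hψ (Filter.Eventually.of_forall fun t => hψ0 t)
      (HasSubset.Subset.eventuallyLE (fun x hx => hx.1.le))
  · -- c = full integral
    have hint : IntegrableOn (fun s => exp (-(l * s)) * u s) (Ici 0) := by
      apply Integrable.mono hψ hgm
      refine (ae_restrict_iff' measurableSet_Ici).2 (Filter.Eventually.of_forall fun s hs => ?_)
      calc ‖exp (-(l * s)) * u s‖ ≤ exp ((a - l) * s) * ψ s := hg s hs
        _ ≤ 1 * ψ s := mul_le_mul_of_nonneg_right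
            (by rw [← exp_zero]; exact exp_le_exp.2 (by nlinarith [mem_Ici.1 hs, hal.le])) (hψ0 s)
        _ = ‖ψ s‖ := by rw [one_mul, Real.norm_eq_abs, abs_of_nonneg (hψ0 s)]
    refine ⟨∫ s in Ici (0:ℝ), exp (-(l * s)) * u s, fun r hr => ?_⟩
    have hsplit : (∫ s in Ici (0:ℝ), exp (-(l * s)) * u s)
        = (∫ s in Icc (0:ℝ) r, exp (-(l * s)) * u s) + ∫ s in Ioi r, exp (-(l * s)) * u s := by
      have hdisj : Disjoint (Icc (0:ℝ) r) (Ioi r) :=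
        Set.disjoint_left.mpr fun x hx hx' => (not_lt.2 hx.2) hx'
      rw [← setIntegral_union hdisj measurableSet_Ioi
        (hint.mono_set Icc_subset_Ici_self)
        (hint.mono_set fun x (hx : r < x) => le_trans hr hx.le),
        Icc_union_Ioi_eq_Ici hr]
    have hIcc : (∫ s in (0:ℝ)..r, exp (-(l * s)) * u s)
        = ∫ s in Icc (0:ℝ) r, exp (-(l * s)) * u s := by
      rw [intervalIntegral.integral_of_le hr, integral_Icc_eq_integral_Ioc]
    rw [hsplit, hIcc]
    rw [show (∫ s in Icc (0:ℝ) r, exp (-(l*s)) * u s) -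
        ((∫ s in Icc (0:ℝ) r, exp (-(l*s)) * u s) + ∫ s in Ioi r, exp (-(l*s)) * u s)
        = -(∫ s in Ioi r, exp (-(l*s)) * u s) by ring, abs_neg]
    have h2 : |∫ s in Ioi r, exp (-(l * s)) * u s| ≤ ∫ s in Ioi r, exp ((a - l) * r) * ψ s := by
      rw [← Real.norm_eq_abs]
      apply norm_integral_le_of_norm_le ((hψ.mono_set fun x (hx : r < x) =>
        le_trans hr hx.le).const_mul _)
      refine (ae_restrict_iff' measurableSet_Ioi).2 (Filter.Eventually.of_forall fun s hs => ?_)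
      calc ‖exp (-(l * s)) * u s‖ ≤ exp ((a - l) * s) * ψ s := hg s (show (0:ℝ) ≤ s from le_trans hr (le_of_lt hs))
        _ ≤ exp ((a - l) * r) * ψ s := mul_le_mul_of_nonneg_right
            (exp_le_exp.2 (by nlinarith [le_of_lt (show r < s from hs)])) (hψ0 s)
    refine h2.trans ?_
    rw [integral_const_mul]
    apply mul_le_mul_of_nonneg_left _ (exp_pos _).le
    exact setIntegral_mono_set hψ (Filter.Eventually.of_forall fun t => hψ0 t)
      (HasSubset.Subset.eventuallyLE fun x (hx : r < x) => le_trans hr hx.le)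


/-- Let `Q(X) = (X - λ₁)(X - λ₂)` with distinct real roots, `a ∈ ℝ`, and let
`ψ : [0,∞) → [0,∞)` be integrable. If `y` is a `C²` solution of `Q(d/dr) y = u` on `[0,∞)` with
`|u(r)| ≤ e^{a r} ψ(r)`, then there are `A₁, A₂` and a constant `C = C(λ₁, λ₂, a)` (independent
of `ψ, u, y`) with `|y(r) - A₁ e^{λ₁ r} - A₂ e^{λ₂ r}| ≤ C ‖ψ‖_{L¹} e^{a r}` for all `r ≥ 0`. -/
theorem stmt_3 (l₁ l₂ a : ℝ) (hne : l₁ ≠ l₂) :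
    ∃ C : ℝ, 0 < C ∧
      ∀ ψ u y y' y'' : ℝ → ℝ,
        (∀ r, 0 ≤ ψ r) →
        IntegrableOn ψ (Ici 0) →
        (∀ r ∈ Ici (0 : ℝ), HasDerivWithinAt y (y' r) (Ici 0) r) →
        (∀ r ∈ Ici (0 : ℝ), HasDerivWithinAt y' (y'' r) (Ici 0) r) →
        ContinuousOn y'' (Ici 0) →
        (∀ r ∈ Ici (0 : ℝ), y'' r - (l₁ + l₂) * y' r + l₁ * l₂ * y r = u r) →
        (∀ r ∈ Ici (0 : ℝ), |u r| ≤ exp (a * r) * ψ r) →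
        ∃ A₁ A₂ : ℝ, ∀ r ∈ Ici (0 : ℝ),
          |y r - A₁ * exp (l₁ * r) - A₂ * exp (l₂ * r)|
            ≤ C * (∫ s in Ici (0 : ℝ), ψ s) * exp (a * r) := by
  have hd : l₁ - l₂ ≠ 0 := sub_ne_zero.2 hne
  have hdpos : (0:ℝ) < |l₁ - l₂| := abs_pos.2 hd
  refine ⟨2 / |l₁ - l₂|, by positivity, ?_⟩
  intro ψ u y y' y'' hψ0 hψ hy hy' hy''c hODE hub
  -- continuity facts
  have hyc : ContinuousOn y (Ici 0) := fun x hx => (hy x hx).continuousWithinAt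
  have hy'c : ContinuousOn y' (Ici 0) := fun x hx => (hy' x hx).continuousWithinAt
  have huc : ContinuousOn u (Ici 0) := by
    have : ContinuousOn (fun r => y'' r - (l₁ + l₂) * y' r + l₁ * l₂ * y r) (Ici 0) :=
      (hy''c.sub (hy'c.const_smul (l₁ + l₂))).add (hyc.const_smul (l₁ * l₂))
    exact this.congr fun x hx => (hODE x hx).symm
  -- the continuous extension of u
  set v : ℝ → ℝ := fun r => u (max r 0) with hv
  have hvcont : Continuous v :=
    huc.comp_continuous (continuous_id.max continuous_const) fun x => le_max_right x 0
  have hvu : ∀ r ∈ Ici (0:ℝ), v r = u r := fun r hr => by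
    simp only [hv, max_eq_left (mem_Ici.1 hr)]
  have hvb : ∀ r ∈ Ici (0:ℝ), |v r| ≤ exp (a * r) * ψ r := fun r hr => by
    rw [hvu r hr]; exact hub r hr
  -- the factorization
  set z : ℝ → ℝ := fun r => y' r - l₂ * y r with hzdef
  set z' : ℝ → ℝ := fun r => y'' r - l₂ * y' r with hz'def
  have hz : ∀ r ∈ Ici (0:ℝ), HasDerivWithinAt z (z' r) (Ici 0) r := fun r hr =>
    (hy' r hr).sub ((hy r hr).const_mul l₂)
  have hzc : ContinuousOn z (Ici 0) := fun x hx => (hz x hx).continuousWithinAt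
  have heq1 : ∀ r ∈ Ici (0:ℝ), z' r - l₁ * z r = v r := by
    intro r hr
    rw [hvu r hr, ← hODE r hr]
    simp only [hzdef, hz'def]
    ring
  have hzrep := first_order_rep l₁ z z' v hz hvcont.continuousOn heq1
  have heq2 : ∀ r ∈ Ici (0:ℝ), y' r - l₂ * y r = z r := fun r hr => rfl
  have hyrep := first_order_rep l₂ y y' z hy hzc heq2
  -- integrals
  set Iu : ℝ → ℝ := fun s => ∫ t in (0:ℝ)..s, exp (-(l₁ * t)) * v t with hIudef
  set Jv : ℝ → ℝ := fun s => ∫ t in (0:ℝ)..s, exp (-(l₂ * t)) * v t with hJvdef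
  have hc1 : Continuous (fun t => exp (-(l₁ * t)) * v t) :=
    (Real.continuous_exp.comp (continuous_const.mul continuous_id).neg).mul hvcont
  have hc2 : Continuous (fun t => exp (-(l₂ * t)) * v t) :=
    (Real.continuous_exp.comp (continuous_const.mul continuous_id).neg).mul hvcont
  have hIu : ∀ s, HasDerivAt Iu (exp (-(l₁ * s)) * v s) s := fun s =>
    (hc1.integral_hasStrictDerivAt 0 s).hasDerivAt
  have hJv : ∀ s, HasDerivAt Jv (exp (-(l₂ * s)) * v s) s := fun s =>
    (hc2.integral_hasStrictDerivAt 0 s).hasDerivAt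
  have hIuc : Continuous Iu := by
    rw [continuous_iff_continuousAt]; exact fun s => (hIu s).continuousAt
  -- the intermediate primitive
  set F : ℝ → ℝ := fun s =>
    exp ((l₁ - l₂) * s) / (l₁ - l₂) * (z 0 + Iu s) - (1 / (l₁ - l₂)) * Jv s with hFdef
  have hF : ∀ s, HasDerivAt F (exp ((l₁ - l₂) * s) * (z 0 + Iu s)) s := by
    intro s
    have he : HasDerivAt (fun t : ℝ => exp ((l₁ - l₂) * t) / (l₁ - l₂))
        (exp ((l₁ - l₂) * s)) s := by
      have h0 : HasDerivAt (fun t : ℝ => exp ((l₁ - l₂) * t))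
          (exp ((l₁ - l₂) * s) * ((l₁ - l₂) * 1)) s :=
        ((hasDerivAt_id s).const_mul (l₁ - l₂)).exp
      have := h0.div_const (l₁ - l₂)
      refine this.congr_deriv ?_
      rw [mul_one, mul_div_assoc, div_self hd, mul_one]
    have h1 : HasDerivAt (fun t => exp ((l₁ - l₂) * t) / (l₁ - l₂) * (z 0 + Iu t))
        (exp ((l₁ - l₂) * s) * (z 0 + Iu s)
          + exp ((l₁ - l₂) * s) / (l₁ - l₂) * (exp (-(l₁ * s)) * v s)) s :=
      he.mul ((hIu s).const_add (z 0))
    have h2 := h1.sub ((hJv s).const_mul (1 / (l₁ - l₂)))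
    refine h2.congr_deriv ?_
    have hee : exp ((l₁ - l₂) * s) * exp (-(l₁ * s)) = exp (-(l₂ * s)) := by
      rw [← exp_add]; ring_nf
    linear_combination (v s / (l₁ - l₂)) * hee
  -- the explicit representation of y on [0, ∞)
  have hyform : ∀ r ∈ Ici (0:ℝ), y r =
      exp (l₂ * r) * (y 0 + (F r - F 0)) := by
    intro r hr
    rw [hyrep r hr]
    congr 2
    rw [← intervalIntegral.integral_eq_sub_of_hasDerivAt
      (f := F) (f' := fun s => exp ((l₁ - l₂) * s) * (z 0 + Iu s))
      (fun x _ => hF x)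
      (((Real.continuous_exp.comp (continuous_const.mul continuous_id)).mul
        (continuous_const.add hIuc)).intervalIntegrable 0 r)]
    apply intervalIntegral.integral_congr
    intro s hs
    rw [uIcc_of_le (mem_Ici.1 hr)] at hs
    show exp (-(l₂ * s)) * z s = exp ((l₁ - l₂) * s) * (z 0 + Iu s)
    rw [hzrep s hs.1]
    rw [show (∫ t in (0:ℝ)..s, exp (-(l₁ * t)) * v t) = Iu s from rfl]
    rw [← mul_assoc, ← exp_add]
    ring_nf
  -- tail estimates
  obtain ⟨c₁, hc₁⟩ := tail_est l₁ a ψ v hψ0 hψ hvcont.continuousOn hvb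
  obtain ⟨c₂, hc₂⟩ := tail_est l₂ a ψ v hψ0 hψ hvcont.continuousOn hvb
  set S : ℝ := ∫ s in Ici (0:ℝ), ψ s with hSdef
  refine ⟨(z 0 + c₁) / (l₁ - l₂), y 0 - (z 0 + c₂) / (l₁ - l₂), ?_⟩
  intro r hr
  have hE : exp ((l₁ - l₂) * r) = exp (l₁ * r) * (exp (l₂ * r))⁻¹ := by
    rw [← exp_neg, ← exp_add]
    ring_nf
  have hform : y r - (z 0 + c₁) / (l₁ - l₂) * exp (l₁ * r)
      - (y 0 - (z 0 + c₂) / (l₁ - l₂)) * exp (l₂ * r)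
      = (exp (l₁ * r) * (Iu r - c₁) - exp (l₂ * r) * (Jv r - c₂)) / (l₁ - l₂) := by
    rw [hyform r hr]
    simp only [hFdef]
    rw [hE]
    have hIu0 : Iu 0 = 0 := intervalIntegral.integral_same
    have hJv0 : Jv 0 = 0 := intervalIntegral.integral_same
    rw [hIu0, hJv0]
    simp only [mul_zero, exp_zero]
    field_simp
    ring
  rw [hform]
  have hb1 : |exp (l₁ * r) * (Iu r - c₁)| ≤ exp (a * r) * S := by
    rw [abs_mul, abs_of_pos (exp_pos _)]
    calc exp (l₁ * r) * |Iu r - c₁| ≤ exp (l₁ * r) * (exp ((a - l₁) * r) * S) :=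
          mul_le_mul_of_nonneg_left (hc₁ r hr) (exp_pos _).le
      _ = exp (a * r) * S := by rw [← mul_assoc, ← exp_add]; ring_nf
  have hb2 : |exp (l₂ * r) * (Jv r - c₂)| ≤ exp (a * r) * S := by
    rw [abs_mul, abs_of_pos (exp_pos _)]
    calc exp (l₂ * r) * |Jv r - c₂| ≤ exp (l₂ * r) * (exp ((a - l₂) * r) * S) :=
          mul_le_mul_of_nonneg_left (hc₂ r hr) (exp_pos _).le
      _ = exp (a * r) * S := by rw [← mul_assoc, ← exp_add]; ring_nf
  rw [abs_div]
  rw [div_le_iff₀ hdpos]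
  calc |exp (l₁ * r) * (Iu r - c₁) - exp (l₂ * r) * (Jv r - c₂)|
      ≤ |exp (l₁ * r) * (Iu r - c₁)| + |exp (l₂ * r) * (Jv r - c₂)| := abs_sub _ _
    _ ≤ exp (a * r) * S + exp (a * r) * S := add_le_add hb1 hb2
    _ = 2 / |l₁ - l₂| * S * exp (a * r) * |l₁ - l₂| := by field_simp; ring
end

section
/- Let Q(X) = (X−λ₁)(X−λ₂) with real roots λ₂ ≤ 0 < λ₁, let R ≥ 2, and let 𝒲(r) = Σₖ βₖ e^{μₖ r} on [0, R−1] with βₖ ≥ 0, μₖ ∉ {λ₁, λ₂}, and suppose 𝒲(r) ≤ K for all r ∈ [R−2, R−1]. Let ψ ∈ L¹([0,R−1]) with ‖ψ‖_{L¹} ≤ K, let a ≥ 0, and let y : [0,R−1] → ℝ be C² with |y| ≤ 1 and |y''(r) − (λ₁+λ₂) y'(r) + λ₁λ₂ y(r)| ≤ K(𝒲(r) + ψ(r) e^{−a r}) for all r. Then there is a constant C depending only on λ₁, λ₂, a, K, the μₖ and the number of summands (but not on R, the βₖ, ψ, or y) such that |y(r)| ≤ C ( e^{λ₂ r}(|y(0)|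 + 𝒲(0) + ‖ψ‖_{L¹}) + e^{λ₁ (r−R)} + 𝒲(r) + ‖ψ‖_{L¹} e^{−a r} ) for all r ∈ [0, R−1]. -/
open Real Set MeasureTheory

lemma int_exp_mul (c x y : ℝ) (hc : c ≠ 0) :
    ∫ t in x..y, exp (c * t) = (exp (c * y) - exp (c * x)) / c := by
  have h : ∀ t : ℝ, HasDerivAt (fun t => exp (c * t) / c) (exp (c * t)) t := by
    intro t
    have := ((hasDerivAt_id t).const_mul c).exp
    simpa [mul_comm, mul_div_assoc, mul_div_cancel_left₀ _ hc] using this.div_const c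
  rw [intervalIntegral.integral_eq_sub_of_hasDerivAt (fun t _ => h t)]
  · ring
  · exact (Real.continuous_exp.comp (continuous_const.mul continuous_id)).intervalIntegrable x y

lemma ftc_within {A B : ℝ} (f f' : ℝ → ℝ)
    (hf : ∀ t ∈ Icc A B, HasDerivWithinAt f (f' t) (Icc A B) t)
    (hcont : ContinuousOn f' (Icc A B)) {x y : ℝ} (hx : x ∈ Icc A B) (hy : y ∈ Icc A B)
    (hxy : x ≤ y) : ∫ t in x..y, f' t = f y - f x := by
  have hsub : Icc x y ⊆ Icc A B := Icc_subset_Icc hx.1 hy.2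
  apply intervalIntegral.integral_eq_sub_of_hasDeriv_right_of_le hxy
  · exact (fun t ht => (hf t (hsub ht)).continuousWithinAt.mono hsub)
  · intro t ht
    have h1 : Icc A B ∈ nhdsWithin t (Ioi t) := by
      have : Ioc t B ∈ nhdsWithin t (Ioi t) :=
        Ioc_mem_nhdsGT_of_mem ⟨le_refl t, lt_of_lt_of_le ht.2 hy.2⟩
      exact Filter.mem_of_superset this
        (fun z hz => ⟨le_trans hx.1 (le_trans ht.1.le hz.1.le), hz.2⟩)
    exact (hf t (hsub (Ioo_subset_Icc_self ht))).mono_of_mem_nhdsWithin h1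
  · exact (hcont.mono hsub).intervalIntegrable_of_Icc hxy

/-- `∫_t^{s₀} e^{l(t-s)+ms} ds ≤ (e^{mt} + e^{l(t-s₀)} e^{m s₀}) / |m-l|` for `m ≠ l`. -/
lemma exp_int_bound (l m t s₀ : ℝ) (hm : m ≠ l) (hts : t ≤ s₀) :
    ∫ s in t..s₀, exp (l * (t - s) + m * s)
      ≤ (exp (m * t) + exp (l * (t - s₀)) * exp (m * s₀)) / |m - l| := by
  have hc : m - l ≠ 0 := sub_ne_zero.2 hm
  have heq : ∫ s in t..s₀, exp (l * (t - s) + m * s)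
      = exp (l * t) * ((exp ((m - l) * s₀) - exp ((m - l) * t)) / (m - l)) := by
    rw [show (fun s => exp (l * (t - s) + m * s)) = fun s => exp (l * t) * exp ((m - l) * s) by
      funext s; rw [← exp_add]; ring_nf]
    rw [intervalIntegral.integral_const_mul, int_exp_mul _ _ _ hc]
  rw [heq]
  have e1 : exp (l * t) * exp ((m - l) * s₀) = exp (l * (t - s₀)) * exp (m * s₀) := by
    rw [← exp_add, ← exp_add]; ring_nf
  have e2 : exp (l * t) * exp ((m - l) * t) = exp (m * t) := by
    rw [← exp_add]; ring_nf
  rcases lt_or_gt_of_ne hc with hneg | hpos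
  · rw [abs_of_neg hneg]
    rw [show exp (l * t) * ((exp ((m - l) * s₀) - exp ((m - l) * t)) / (m - l))
        = (exp (l * t) * exp ((m - l) * t) - exp (l * t) * exp ((m - l) * s₀)) / (-(m - l)) by
      rw [eq_div_iff (by linarith : -(m - l) ≠ 0)]; field_simp; ring]
    rw [div_le_div_iff₀ (by linarith) (by linarith)]
    nlinarith [mul_pos (exp_pos (l * (t - s₀))) (exp_pos (m * s₀)),
      mul_pos (exp_pos (l * t)) (exp_pos ((m - l) * s₀)), exp_pos (m * t)]
  · rw [abs_of_pos hpos]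
    rw [show exp (l * t) * ((exp ((m - l) * s₀) - exp ((m - l) * t)) / (m - l))
        = (exp (l * t) * exp ((m - l) * s₀) - exp (l * t) * exp ((m - l) * t)) / (m - l) by
      ring]
    rw [div_le_div_iff₀ (by linarith) (by linarith)]
    nlinarith [exp_pos (m * t), mul_pos (exp_pos (l * t)) (exp_pos ((m - l) * t)),
      mul_pos (exp_pos (l * (t - s₀))) (exp_pos (m * s₀))]

lemma tonelli_step (l₁ l₂ a B r : ℝ) (hl₁ : 0 < l₁) (hl₂ : l₂ ≤ 0) (ha : 0 ≤ a)
    (hr : 0 ≤ r) (hrB : r ≤ B) (ψ : ℝ → ℝ) (hψm : Measurable ψ) (hψ0 : ∀ s, 0 ≤ ψ s)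
    (hψi : IntegrableOn ψ (Icc 0 B)) :
    ∫ t in Icc 0 r, exp (l₂ * (r - t)) *
        (exp (l₁ * t) * ∫ s in Ioc t B, exp (-(l₁ * s)) * (ψ s * exp (-(a * s))))
      ≤ ((exp (l₂ * r) + exp (-(a * r))) / (l₁ - l₂)) * ∫ s in Icc 0 B, ψ s := by
  have hl₁l₂ : 0 < l₁ - l₂ := by linarith
  set M : ℝ := (exp (l₂ * r) + exp (-(a * r))) / (l₁ - l₂) with hM
  set k : ℝ → ℝ → ℝ :=
    fun t s => if t ≤ s then exp (l₂ * (r - t) + (l₁ * (t - s) - a * s)) else 0 with hk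
  have hk0 : ∀ t s, 0 ≤ k t s := by
    intro t s; simp only [hk]; split <;> positivity
  -- Step A : rewrite the integrand
  have hstepA : ∀ t ∈ Icc (0:ℝ) r,
      exp (l₂ * (r - t)) * (exp (l₁ * t) * ∫ s in Ioc t B, exp (-(l₁ * s)) * (ψ s * exp (-(a * s))))
        = ∫ s in Icc 0 B, k t s * ψ s := by
    intro t ht
    have h1 : ∫ s in Icc (0:ℝ) B, k t s * ψ s
        = ∫ s in Icc (0:ℝ) B, (Icc t B).indicator
            (fun s => exp (l₂ * (r - t)) * (exp (l₁ * t) * (exp (-(l₁ * s)) * (ψ s * exp (-(a * s)))))) s := by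
      apply setIntegral_congr_fun measurableSet_Icc
      intro s hs
      simp only [hk, Set.indicator_apply, mem_Icc]
      by_cases hts : t ≤ s
      · rw [if_pos hts, if_pos (⟨hts, hs.2⟩ : t ≤ s ∧ s ≤ B)]
        rw [show exp (l₂ * (r - t)) * (exp (l₁ * t) * (exp (-(l₁ * s)) * (ψ s * exp (-(a * s)))))
            = exp (l₂ * (r - t)) * exp (l₁ * t) * exp (-(l₁ * s)) * exp (-(a * s)) * ψ s from by
          ring, ← exp_add, ← exp_add, ← exp_add]
        congr 2
        ring
      · rw [if_neg hts, if_neg (fun hmem => hts hmem.1), zero_mul]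
    rw [h1, setIntegral_indicator measurableSet_Icc,
      show Icc (0:ℝ) B ∩ Icc t B = Icc t B by
        apply inter_eq_self_of_subset_right
        exact Icc_subset_Icc ht.1 le_rfl,
      integral_Icc_eq_integral_Ioc, integral_const_mul, integral_const_mul]
  rw [setIntegral_congr_fun measurableSet_Icc hstepA]
  -- Step B : integrability on the product
  have hkm : Measurable (fun p : ℝ × ℝ => k p.1 p.2) := by
    apply Measurable.ite (measurableSet_le measurable_fst measurable_snd)
    · fun_prop
    · exact measurable_const
  have hF : Integrable (Function.uncurry fun t s => k t s * ψ s)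
      ((volume.restrict (Icc 0 r)).prod (volume.restrict (Icc 0 B))) := by
    apply Integrable.mono' (g := fun p : ℝ × ℝ => (1:ℝ) * ψ p.2)
    · exact Integrable.mul_prod (integrableOn_const (C := (1:ℝ)) measure_Icc_lt_top.ne) hψi
    · exact (hkm.mul (hψm.comp measurable_snd)).aestronglyMeasurable
    · rw [Measure.prod_restrict]
      filter_upwards [ae_restrict_mem (measurableSet_Icc.prod measurableSet_Icc)] with p hp
      rw [mem_prod] at hp
      obtain ⟨hp1, hp2⟩ := hp
      have hkle : k p.1 p.2 ≤ 1 := by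
        simp only [hk]
        split
        · rw [exp_le_one_iff]
          have h1 : l₂ * (r - p.1) ≤ 0 := mul_nonpos_of_nonpos_of_nonneg hl₂ (by linarith [hp1.2])
          have h2 : l₁ * (p.1 - p.2) ≤ 0 := mul_nonpos_of_nonneg_of_nonpos hl₁.le (by linarith)
          have h3 : 0 ≤ a * p.2 := mul_nonneg ha hp2.1
          linarith
        · linarith
      have := hψ0 p.2
      show ‖k p.1 p.2 * ψ p.2‖ ≤ 1 * ψ p.2
      rw [Real.norm_eq_abs, abs_of_nonneg (mul_nonneg (hk0 _ _) this)]
      nlinarith [hk0 p.1 p.2]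
  -- Step C : swap
  rw [MeasureTheory.integral_integral_swap hF]
  -- Step D : bound the inner integral
  have hinner : ∀ s ∈ Icc (0:ℝ) B, (∫ t in Icc (0:ℝ) r, k t s * ψ s) ≤ M * ψ s := by
    intro s hs
    rw [integral_mul_const]
    have hkint : ∫ t in Icc (0:ℝ) r, k t s ≤ M := by
      have h2 : ∫ t in Icc (0:ℝ) r, k t s
          = ∫ t in Icc 0 (min r s), exp (l₂ * (r - t) + (l₁ * (t - s) - a * s)) := by
        have heqk : ∀ t, k t s = (Iic s).indicator
            (fun t => exp (l₂ * (r - t) + (l₁ * (t - s) - a * s))) t := by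
          intro t
          simp only [hk, Set.indicator_apply, mem_Iic]
        simp_rw [heqk]
        rw [setIntegral_indicator measurableSet_Iic,
          show Icc (0:ℝ) r ∩ Iic s = Icc 0 (min r s) by
            ext x; simp [le_min_iff, and_assoc]]
      rw [h2]
      set m := min r s with hm'
      have hm0 : 0 ≤ m := le_min hr hs.1
      have hms : m ≤ s := min_le_right r s
      have hmr : m ≤ r := min_le_left r s
      have h3 : ∫ t in Icc (0:ℝ) m, exp (l₂ * (r - t) + (l₁ * (t - s) - a * s))
          = exp (l₂ * r - l₁ * s - a * s) * ((exp ((l₁ - l₂) * m) - exp ((l₁ - l₂) * 0)) / (l₁ - l₂)) := by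
        rw [integral_Icc_eq_integral_Ioc, ← intervalIntegral.integral_of_le hm0]
        rw [show (fun t => exp (l₂ * (r - t) + (l₁ * (t - s) - a * s)))
            = fun t => exp (l₂ * r - l₁ * s - a * s) * exp ((l₁ - l₂) * t) by
          funext t; rw [← exp_add]; ring_nf]
        rw [intervalIntegral.integral_const_mul, int_exp_mul _ _ _ (ne_of_gt hl₁l₂)]
      rw [h3]
      have hkey : exp (l₂ * r - l₁ * s - a * s) * exp ((l₁ - l₂) * m)
          ≤ exp (l₂ * r) + exp (-(a * r)) := by
        rw [← exp_add]
        rcases le_or_gt r s with hrs | hsr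
        · have hmm : m = r := min_eq_left hrs
          have h4 : l₂ * r - l₁ * s - a * s + (l₁ - l₂) * m ≤ -(a * r) := by
            rw [hmm]
            have : l₁ * (r - s) ≤ 0 := mul_nonpos_of_nonneg_of_nonpos hl₁.le (by linarith)
            have : a * r ≤ a * s := mul_le_mul_of_nonneg_left hrs ha
            nlinarith
          calc exp _ ≤ exp (-(a * r)) := exp_le_exp.2 h4
            _ ≤ _ := by linarith [exp_pos (l₂ * r)]
        · have hmm : m = s := min_eq_right hsr.le
          rcases le_or_gt 0 (l₂ + a) with hla | hla
          · have h4 : l₂ * r - l₁ * s - a * s + (l₁ - l₂) * m ≤ l₂ * r := by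
              rw [hmm]; nlinarith [hs.1]
            calc exp _ ≤ exp (l₂ * r) := exp_le_exp.2 h4
              _ ≤ _ := by linarith [exp_pos (-(a * r))]
          · have h4 : l₂ * r - l₁ * s - a * s + (l₁ - l₂) * m ≤ -(a * r) := by
              rw [hmm]; nlinarith
            calc exp _ ≤ exp (-(a * r)) := exp_le_exp.2 h4
              _ ≤ _ := by linarith [exp_pos (l₂ * r)]
      rw [hM]
      calc exp (l₂ * r - l₁ * s - a * s) * ((exp ((l₁ - l₂) * m) - exp ((l₁ - l₂) * 0)) / (l₁ - l₂))
          = (exp (l₂ * r - l₁ * s - a * s) * exp ((l₁ - l₂) * m)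
              - exp (l₂ * r - l₁ * s - a * s) * exp ((l₁ - l₂) * 0)) / (l₁ - l₂) := by ring
        _ ≤ (exp (l₂ * r) + exp (-(a * r))) / (l₁ - l₂) := by
            have hnum : exp (l₂ * r - l₁ * s - a * s) * exp ((l₁ - l₂) * m)
                - exp (l₂ * r - l₁ * s - a * s) * exp ((l₁ - l₂) * 0)
                ≤ exp (l₂ * r) + exp (-(a * r)) := by
              nlinarith [mul_pos (exp_pos (l₂ * r - l₁ * s - a * s)) (exp_pos ((l₁ - l₂) * 0))]
            exact div_le_div_of_nonneg_right hnum hl₁l₂.le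
    exact mul_le_mul_of_nonneg_right hkint (hψ0 s)
  -- Step E : integrate the bound
  calc ∫ s in Icc (0:ℝ) B, ∫ t in Icc (0:ℝ) r, k t s * ψ s
      ≤ ∫ s in Icc (0:ℝ) B, M * ψ s := by
        apply setIntegral_mono_on _ _ measurableSet_Icc hinner
        · exact hF.integral_prod_right
        · exact hψi.const_mul M
    _ = M * ∫ s in Icc (0:ℝ) B, ψ s := integral_const_mul M _

/-- `∫_0^r e^{l(r-x)+mx} dx ≤ (e^{mr} + e^{lr} e^{m·0}) / |m-l|` for `m ≠ l`. -/
lemma exp_int_bound' (l m r : ℝ) (hm : m ≠ l) (hr : 0 ≤ r) :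
    ∫ x in (0:ℝ)..r, exp (l * (r - x) + m * x)
      ≤ (exp (m * r) + exp (l * r) * exp (m * 0)) / |m - l| := by
  have hc : m - l ≠ 0 := sub_ne_zero.2 hm
  have heq : ∫ x in (0:ℝ)..r, exp (l * (r - x) + m * x)
      = exp (l * r) * ((exp ((m - l) * r) - exp ((m - l) * 0)) / (m - l)) := by
    rw [show (fun x => exp (l * (r - x) + m * x)) = fun x => exp (l * r) * exp ((m - l) * x) by
      funext x; rw [← exp_add]; ring_nf]
    rw [intervalIntegral.integral_const_mul, int_exp_mul _ _ _ hc]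
  rw [heq]
  have e1 : exp (l * r) * exp ((m - l) * r) = exp (m * r) := by rw [← exp_add]; ring_nf
  have e2 : exp ((m - l) * 0) = 1 := by norm_num
  have e3 : exp (m * 0) = 1 := by norm_num
  rcases lt_or_gt_of_ne hc with hneg | hpos
  · rw [abs_of_neg hneg,
      show exp (l * r) * ((exp ((m - l) * r) - exp ((m - l) * 0)) / (m - l))
        = (exp (l * r) * exp ((m - l) * 0) - exp (l * r) * exp ((m - l) * r)) / (-(m - l)) by
        rw [eq_div_iff (by linarith : -(m - l) ≠ 0)]; field_simp; ring,
      div_le_div_iff₀ (by linarith) (by linarith), e2, e3]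
    nlinarith [exp_pos (m * r), exp_pos (l * r), mul_pos (exp_pos (l * r)) (exp_pos ((m - l) * r))]
  · rw [abs_of_pos hpos,
      show exp (l * r) * ((exp ((m - l) * r) - exp ((m - l) * 0)) / (m - l))
        = (exp (l * r) * exp ((m - l) * r) - exp (l * r) * exp ((m - l) * 0)) / (m - l) by ring,
      div_le_div_iff₀ (by linarith) (by linarith), e2, e3]
    nlinarith [exp_pos (m * r), exp_pos (l * r), e1.symm ▸ exp_pos (m * r)]

set_option maxHeartbeats 2000000 in
/-- Growth estimate for the ODE `Q(d/dr) y = u` with `Q(X) = (X-λ₁)(X-λ₂)`,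
`λ₂ ≤ 0 < λ₁`, on `[0, R-1]` (`R ≥ 2`): if `|y| ≤ 1` and
`|Q(d/dr) y (r)| ≤ K (𝒲(r) + ψ(r) e^{-a r})`, where `𝒲(r) = ∑ₖ βₖ e^{μₖ r}` with
`μₖ ∉ {λ₁, λ₂}`, `𝒲 ≤ K` on `[R-2, R-1]` and `‖ψ‖_{L¹([0,R-1])} ≤ K`, then
`|y(r)| ≤ C (e^{λ₂ r}(|y(0)| + 𝒲(0) + ‖ψ‖_{L¹}) + e^{λ₁(r-R)} + 𝒲(r) + ‖ψ‖_{L¹} e^{-a r})`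
for a constant `C` depending only on `λ₁, λ₂, a, K` and the `μₖ` — not on `R`, the `βₖ`,
`ψ` or `y`. -/
theorem stmt_6 {ι : Type} [Fintype ι] (l₁ l₂ a K : ℝ)
    (hl₂ : l₂ ≤ 0) (hl₁ : 0 < l₁) (ha : 0 ≤ a) (hK : 0 < K)
    (μ : ι → ℝ) (hμ₁ : ∀ k, μ k ≠ l₁) (hμ₂ : ∀ k, μ k ≠ l₂) :
    ∃ C : ℝ, 0 < C ∧
      ∀ R : ℝ, 2 ≤ R →
      ∀ β : ι → ℝ, (∀ k, 0 ≤ β k) →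
      (∀ r ∈ Icc (R - 2) (R - 1), (∑ k, β k * exp (μ k * r)) ≤ K) →
      ∀ ψ : ℝ → ℝ, (∀ r, 0 ≤ ψ r) →
        IntegrableOn ψ (Icc 0 (R - 1)) →
        (∫ s in Icc (0 : ℝ) (R - 1), ψ s) ≤ K →
      ∀ y y' y'' : ℝ → ℝ,
        (∀ r ∈ Icc (0 : ℝ) (R - 1), HasDerivWithinAt y (y' r) (Icc 0 (R - 1)) r) →
        (∀ r ∈ Icc (0 : ℝ) (R - 1), HasDerivWithinAt y' (y'' r) (Icc 0 (R - 1)) r) →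
        ContinuousOn y'' (Icc 0 (R - 1)) →
        (∀ r ∈ Icc (0 : ℝ) (R - 1), |y r| ≤ 1) →
        (∀ r ∈ Icc (0 : ℝ) (R - 1),
          |y'' r - (l₁ + l₂) * y' r + l₁ * l₂ * y r|
            ≤ K * ((∑ k, β k * exp (μ k * r)) + ψ r * exp (-(a * r)))) →
        ∀ r ∈ Icc (0 : ℝ) (R - 1),
          |y r| ≤ C * (exp (l₂ * r) * (|y 0| + (∑ k, β k * exp (μ k * 0))
                + ∫ s in Icc (0 : ℝ) (R - 1), ψ s)
            + exp (l₁ * (r - R))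
            + (∑ k, β k * exp (μ k * r))
            + (∫ s in Icc (0 : ℝ) (R - 1), ψ s) * exp (-(a * r))) := by
  classical
  set M₁ : ℝ := 1 + ∑ k, 1 / |μ k - l₁| with hM₁def
  set M₂ : ℝ := 1 + ∑ k, 1 / |μ k - l₂| with hM₂def
  have hM₁sum : (0:ℝ) ≤ ∑ k, 1 / |μ k - l₁| :=
    Finset.sum_nonneg fun k _ => by positivity
  have hM₂sum : (0:ℝ) ≤ ∑ k, 1 / |μ k - l₂| :=
    Finset.sum_nonneg fun k _ => by positivity
  have hM₁pos : 0 < M₁ := by rw [hM₁def]; linarith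
  have hM₂pos : 0 < M₂ := by rw [hM₂def]; linarith
  have hM₁k : ∀ k, 1 / |μ k - l₁| ≤ M₁ := by
    intro k
    rw [hM₁def]
    have := Finset.single_le_sum (f := fun k => 1 / |μ k - l₁|)
      (fun k _ => by positivity) (Finset.mem_univ k)
    linarith
  have hM₂k : ∀ k, 1 / |μ k - l₂| ≤ M₂ := by
    intro k
    rw [hM₂def]
    have := Finset.single_le_sum (f := fun k => 1 / |μ k - l₂|)
      (fun k _ => by positivity) (Finset.mem_univ k)
    linarith
  set C₁ : ℝ := (2 + |l₂|) * exp (3 * l₁) + K * M₁ * (1 + K * exp (2 * l₁))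
      + 2 * K * K * exp (3 * l₁) with hC₁def
  have hC₁pos : 0 < C₁ := by rw [hC₁def]; positivity
  set C : ℝ := 1 + C₁ / l₁ + C₁ * M₂ + K / (l₁ - l₂) with hCdef
  have hl₁l₂ : 0 < l₁ - l₂ := by linarith
  have hCpos : 0 < C := by rw [hCdef]; positivity
  refine ⟨C, hCpos, ?_⟩
  intro R hR β hβ hWle ψ hψ0 hψint hψK y y' y'' hdy hdy' hy''cont hybd hode r hrS
  have hr0 : 0 ≤ r := hrS.1
  have hrR : r ≤ R - 1 := hrS.2
  have h0S : (0:ℝ) ∈ Icc (0:ℝ) (R-1) := ⟨le_rfl, by linarith⟩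
  -- basic continuity
  have hycont : ContinuousOn y (Icc 0 (R-1)) := fun x hx => (hdy x hx).continuousWithinAt
  have hy'cont : ContinuousOn y' (Icc 0 (R-1)) := fun x hx => (hdy' x hx).continuousWithinAt
  have hWnn : ∀ x : ℝ, 0 ≤ ∑ k, β k * exp (μ k * x) :=
    fun x => Finset.sum_nonneg fun k _ => mul_nonneg (hβ k) (exp_pos _).le
  have hIψ0 : 0 ≤ ∫ s in Icc (0:ℝ) (R-1), ψ s :=
    setIntegral_nonneg measurableSet_Icc fun x _ => hψ0 x
  -- the function u and its data
  set u : ℝ → ℝ := fun x => y' x - l₂ * y x with hudef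
  have hu : ∀ x ∈ Icc (0:ℝ) (R-1), HasDerivWithinAt u (y'' x - l₂ * y' x) (Icc 0 (R-1)) x :=
    fun x hx => (hdy' x hx).sub ((hdy x hx).const_mul l₂)
  have hucont : ContinuousOn u (Icc 0 (R-1)) :=
    hy'cont.sub (continuousOn_const.mul hycont)
  set fq : ℝ → ℝ := fun x => y'' x - l₂ * y' x - l₁ * u x with hfqdef
  have hfqcont : ContinuousOn fq (Icc 0 (R-1)) :=
    (hy''cont.sub (continuousOn_const.mul hy'cont)).sub (continuousOn_const.mul hucont)
  have hfqb : ∀ x ∈ Icc (0:ℝ) (R-1),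
      |fq x| ≤ K * ((∑ k, β k * exp (μ k * x)) + ψ x * exp (-(a * x))) := by
    intro x hx
    have : fq x = y'' x - (l₁ + l₂) * y' x + l₁ * l₂ * y x := by
      simp only [hfqdef, hudef]; ring
    rw [this]; exact hode x hx
  -- measurable modification of ψ
  have hψae : AEStronglyMeasurable ψ (volume.restrict (Icc 0 (R-1))) :=
    hψint.aestronglyMeasurable
  set ψ' : ℝ → ℝ := fun x => max (hψae.mk ψ x) 0 with hψ'def
  have hψ'm : Measurable ψ' := (hψae.stronglyMeasurable_mk.measurable).max measurable_const
  have hψ'0 : ∀ x, 0 ≤ ψ' x := fun x => le_max_right _ _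
  have hψeq : ψ =ᵐ[volume.restrict (Icc 0 (R-1))] ψ' := by
    filter_upwards [hψae.ae_eq_mk] with x hx
    rw [hψ'def]
    simp only [← hx, max_eq_left (hψ0 x)]
  have hψ'int : IntegrableOn ψ' (Icc 0 (R-1)) := hψint.congr hψeq
  have hIψ' : ∫ s in Icc (0:ℝ) (R-1), ψ' s = ∫ s in Icc (0:ℝ) (R-1), ψ s :=
    (integral_congr_ae hψeq).symm
  -- the primitive P of e^{-l₁ s} ψ'(s) e^{-a s}
  have hggprod : (fun s => exp (-(l₁ * s)) * (ψ' s * exp (-(a * s))))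
      = fun s => (exp (-(l₁ * s)) * exp (-(a * s))) * ψ' s := by
    funext s; ring
  have hggint : IntegrableOn (fun s => exp (-(l₁ * s)) * (ψ' s * exp (-(a * s))))
      (Icc 0 (R-1)) := by
    rw [hggprod]
    exact IntegrableOn.continuousOn_mul (by fun_prop) hψ'int isCompact_Icc
  have hggintψ : IntegrableOn (fun s => exp (-(l₁ * s)) * (ψ s * exp (-(a * s))))
      (Icc 0 (R-1)) := by
    apply hggint.congr
    filter_upwards [hψeq] with s hs
    rw [hs]
  have hgg0 : ∀ s, 0 ≤ exp (-(l₁ * s)) * (ψ' s * exp (-(a * s))) := fun s => by positivity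
  set P : ℝ → ℝ := fun x => ∫ s in Ioc (0:ℝ) x, exp (-(l₁ * s)) * (ψ' s * exp (-(a * s)))
    with hPdef
  have hPcont : ContinuousOn P (Icc 0 (R-1)) :=
    intervalIntegral.continuousOn_primitive hggint
  have hPdiff : ∀ t ∈ Icc (0:ℝ) (R-1),
      P (R-1) - P t = ∫ s in Ioc t (R-1), exp (-(l₁ * s)) * (ψ' s * exp (-(a * s))) := by
    intro t ht
    have hint1 : IntervalIntegrable (fun s => exp (-(l₁ * s)) * (ψ' s * exp (-(a * s))))
        volume 0 t := by
      rw [intervalIntegrable_iff_integrableOn_Icc_of_le ht.1]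
      exact hggint.mono_set (Icc_subset_Icc le_rfl ht.2)
    have hint2 : IntervalIntegrable (fun s => exp (-(l₁ * s)) * (ψ' s * exp (-(a * s))))
        volume t (R-1) := by
      rw [intervalIntegrable_iff_integrableOn_Icc_of_le ht.2]
      exact hggint.mono_set (Icc_subset_Icc ht.1 le_rfl)
    have hadd := intervalIntegral.integral_add_adjacent_intervals hint1 hint2
    have h1 : P t = ∫ s in (0:ℝ)..t, exp (-(l₁ * s)) * (ψ' s * exp (-(a * s))) := by
      rw [hPdef, intervalIntegral.integral_of_le ht.1]
    have h2 : P (R-1) = ∫ s in (0:ℝ)..(R-1), exp (-(l₁ * s)) * (ψ' s * exp (-(a * s))) := by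
      rw [hPdef, intervalIntegral.integral_of_le (by linarith : (0:ℝ) ≤ R-1)]
    rw [h1, h2, ← hadd, intervalIntegral.integral_of_le ht.2]
    ring
  have hPnn : ∀ t ∈ Icc (0:ℝ) (R-1), 0 ≤ P (R-1) - P t := by
    intro t ht
    rw [hPdiff t ht]
    exact setIntegral_nonneg measurableSet_Ioc fun s _ => hgg0 s
  -- mean value point
  have hder : ∀ x ∈ Ioo (R-2) (R-1), HasDerivAt y (y' x) x := by
    intro x hx
    have hxS : x ∈ Icc (0:ℝ) (R-1) := ⟨by linarith [hx.1], hx.2.le⟩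
    exact (hdy x hxS).hasDerivAt (Icc_mem_nhds (by linarith [hx.1]) hx.2)
  obtain ⟨s₀, hs₀Ioo, hs₀eq⟩ := exists_hasDerivAt_eq_slope y y'
    (by linarith : R-2 < R-1)
    (hycont.mono (Icc_subset_Icc (by linarith) le_rfl)) hder
  have hs₀S : s₀ ∈ Icc (0:ℝ) (R-1) := ⟨by linarith [hs₀Ioo.1], hs₀Ioo.2.le⟩
  have hy's₀ : |y' s₀| ≤ 2 := by
    rw [hs₀eq, show R - 1 - (R - 2) = (1:ℝ) by ring, div_one]
    have h1 := hybd (R-1) ⟨by linarith, le_rfl⟩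
    have h2 := hybd (R-2) ⟨by linarith, by linarith⟩
    calc |y (R-1) - y (R-2)| ≤ |y (R-1)| + |y (R-2)| := abs_sub _ _
      _ ≤ 2 := by linarith
  have hus₀ : |u s₀| ≤ 2 + |l₂| := by
    have h1 := hybd s₀ hs₀S
    calc |u s₀| ≤ |y' s₀| + |l₂ * y s₀| := abs_sub _ _
      _ ≤ 2 + |l₂| := by
          rw [abs_mul]
          nlinarith [abs_nonneg (y s₀), abs_nonneg l₂]
  -- Stage 1 : bound on u
  have hWcont : Continuous fun x : ℝ => ∑ k : ι, β k * exp (μ k * x) :=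
    continuous_finset_sum _ fun k _ =>
      continuous_const.mul (Real.continuous_exp.comp (continuous_const.mul continuous_id))
  have hubd : ∀ t ∈ Icc (0:ℝ) (R-1),
      |u t| ≤ C₁ * (exp (l₁ * (t - R)) + ∑ k, β k * exp (μ k * t))
        + K * (exp (l₁ * t) * (P (R-1) - P t)) := by
    set v : ℝ → ℝ := fun x => exp (-(l₁ * x)) * u x with hvdef
    have hederiv : ∀ x : ℝ, HasDerivAt (fun x => exp (-(l₁ * x))) (-l₁ * exp (-(l₁ * x))) x := by
      intro x
      have h := (((hasDerivAt_id x).const_mul l₁).neg).exp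
      simp only [id_eq, mul_one] at h
      convert h using 1
      · rfl
      change -l₁ * exp (-(l₁ * x)) = exp (-(l₁ * x)) * -l₁
      ring
    have hv : ∀ x ∈ Icc (0:ℝ) (R-1),
        HasDerivWithinAt v (exp (-(l₁ * x)) * fq x) (Icc 0 (R-1)) x := by
      intro x hx
      have h := ((hederiv x).hasDerivWithinAt).mul (hu x hx)
      convert h using 1
      case e'_9 =>
        change exp (-(l₁ * x)) * (y'' x - l₂ * y' x - l₁ * u x) = _
        ring
      all_goals rfl
    have hvcont' : ContinuousOn (fun x => exp (-(l₁ * x)) * fq x) (Icc 0 (R-1)) :=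
      (Continuous.continuousOn (by fun_prop)).mul hfqcont
    have hut : ∀ x : ℝ, u x = exp (l₁ * x) * v x := by
      intro x
      rw [hvdef]
      rw [← mul_assoc, ← exp_add, show l₁ * x + -(l₁ * x) = 0 by ring, exp_zero, one_mul]
    have hbnd : ∀ x ∈ Icc (0:ℝ) (R-1), |exp (-(l₁*x)) * fq x| ≤
        exp (-(l₁*x)) * (K * ∑ k, β k * exp (μ k * x))
          + (K * (exp (-(l₁*x)) * exp (-(a*x)))) * ψ x := by
      intro x hx
      rw [abs_mul, abs_of_pos (exp_pos _)]
      have h2 : exp (-(l₁*x)) * |fq x|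
          ≤ exp (-(l₁*x)) * (K * ((∑ k, β k * exp (μ k * x)) + ψ x * exp (-(a*x)))) :=
        mul_le_mul_of_nonneg_left (hfqb x hx) (exp_pos _).le
      calc exp (-(l₁*x)) * |fq x|
          ≤ exp (-(l₁*x)) * (K * ((∑ k, β k * exp (μ k * x)) + ψ x * exp (-(a*x)))) := h2
        _ = exp (-(l₁*x)) * (K * ∑ k, β k * exp (μ k * x))
              + (K * (exp (-(l₁*x)) * exp (-(a*x)))) * ψ x := by ring
    have hcont1 : Continuous fun x : ℝ => exp (-(l₁*x)) * (K * ∑ k, β k * exp (μ k * x)) :=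
      (by fun_prop : Continuous fun x : ℝ => exp (-(l₁*x))).mul (continuous_const.mul hWcont)
    have hint1 : ∀ c d : ℝ, c ≤ d →
        IntervalIntegrable (fun x => exp (-(l₁*x)) * (K * ∑ k, β k * exp (μ k * x)))
          volume c d :=
      fun c d hcd => hcont1.continuousOn.intervalIntegrable_of_Icc hcd
    have hint2 : ∀ c d : ℝ, c ∈ Icc (0:ℝ) (R-1) → d ∈ Icc (0:ℝ) (R-1) → c ≤ d →
        IntervalIntegrable (fun x => (K * (exp (-(l₁*x)) * exp (-(a*x)))) * ψ x)
          volume c d := by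
      intro c d hc hd hcd
      rw [intervalIntegrable_iff_integrableOn_Icc_of_le hcd]
      exact IntegrableOn.continuousOn_mul (by fun_prop)
        (hψint.mono_set (Icc_subset_Icc hc.1 hd.2)) isCompact_Icc
    have hintbnd : ∀ c d : ℝ, c ∈ Icc (0:ℝ) (R-1) → d ∈ Icc (0:ℝ) (R-1) → c ≤ d →
        IntervalIntegrable (fun x => exp (-(l₁*x)) * (K * ∑ k, β k * exp (μ k * x))
          + (K * (exp (-(l₁*x)) * exp (-(a*x)))) * ψ x) volume c d :=
      fun c d hc hd hcd => (hint1 c d hcd).add (hint2 c d hc hd hcd)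
    have hvdiff : ∀ c d : ℝ, c ∈ Icc (0:ℝ) (R-1) → d ∈ Icc (0:ℝ) (R-1) → c ≤ d →
        |v d - v c| ≤ ∫ x in c..d, (exp (-(l₁*x)) * (K * ∑ k, β k * exp (μ k * x))
          + (K * (exp (-(l₁*x)) * exp (-(a*x)))) * ψ x) := by
      intro c d hc hd hcd
      rw [← ftc_within v _ hv hvcont' hc hd hcd]
      calc |∫ x in c..d, exp (-(l₁*x)) * fq x|
          ≤ ∫ x in c..d, |exp (-(l₁*x)) * fq x| :=
            intervalIntegral.abs_integral_le_integral_abs hcd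
        _ ≤ _ := by
            apply intervalIntegral.integral_mono_on hcd
              ((hvcont'.mono (Icc_subset_Icc hc.1 hd.2)).intervalIntegrable_of_Icc hcd).abs
              (hintbnd c d hc hd hcd)
            exact fun x hx => hbnd x (Icc_subset_Icc hc.1 hd.2 hx)
    intro t ht
    -- key exponential comparisons
    have hs₀R2 : R - 2 ≤ s₀ := hs₀Ioo.1.le
    have hWs₀ : (∑ k, β k * exp (μ k * s₀)) ≤ K := hWle s₀ ⟨hs₀R2, hs₀Ioo.2.le⟩
    have hXpos : 0 < exp (l₁ * (t - R)) := exp_pos _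
    have hYnn : 0 ≤ ∑ k, β k * exp (μ k * t) := hWnn t
    have hPt : 0 ≤ exp (l₁ * t) * (P (R-1) - P t) :=
      mul_nonneg (exp_pos _).le (hPnn t ht)
    have hvs₀ : exp (l₁ * t) * |v s₀| = exp (l₁ * (t - s₀)) * |u s₀| := by
      rw [hvdef]
      simp only [abs_mul, abs_of_pos (exp_pos (-(l₁ * s₀)))]
      rw [← mul_assoc, ← exp_add]
      congr 2
      ring
    rcases le_or_gt t s₀ with hts | hst
    · -- t ≤ s₀
      have hΛ : exp (l₁ * (t - s₀)) ≤ exp (2 * l₁) * exp (l₁ * (t - R)) := by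
        rw [← exp_add]
        apply exp_le_exp.2
        have := mul_le_mul_of_nonneg_left (show R - s₀ ≤ 2 by linarith [hs₀R2]) hl₁.le
        linarith
      have h1 : |v t| ≤ |v s₀| + ∫ x in t..s₀, (exp (-(l₁*x)) * (K * ∑ k, β k * exp (μ k * x))
          + (K * (exp (-(l₁*x)) * exp (-(a*x)))) * ψ x) := by
        have h := hvdiff t s₀ ht hs₀S hts
        have htri := abs_sub_abs_le_abs_sub (v t) (v s₀)
        rw [abs_sub_comm] at htri
        linarith
      have hsplit : (∫ x in t..s₀, (exp (-(l₁*x)) * (K * ∑ k, β k * exp (μ k * x))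
            + (K * (exp (-(l₁*x)) * exp (-(a*x)))) * ψ x))
          = (∫ x in t..s₀, exp (-(l₁*x)) * (K * ∑ k, β k * exp (μ k * x)))
            + ∫ x in t..s₀, (K * (exp (-(l₁*x)) * exp (-(a*x)))) * ψ x :=
        intervalIntegral.integral_add (hint1 t s₀ hts) (hint2 t s₀ ht hs₀S hts)
      have hmain : |u t| ≤ exp (l₁ * (t - s₀)) * |u s₀|
          + ((exp (l₁ * t) * ∫ x in t..s₀, exp (-(l₁*x)) * (K * ∑ k, β k * exp (μ k * x)))
            + exp (l₁ * t) * ∫ x in t..s₀, (K * (exp (-(l₁*x)) * exp (-(a*x)))) * ψ x) := by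
        rw [hut t, abs_mul, abs_of_pos (exp_pos _)]
        calc exp (l₁ * t) * |v t|
            ≤ exp (l₁ * t) * (|v s₀| + _) := mul_le_mul_of_nonneg_left h1 (exp_pos _).le
          _ = exp (l₁ * (t - s₀)) * |u s₀|
                + (exp (l₁ * t) * (∫ x in t..s₀, exp (-(l₁*x)) * (K * ∑ k, β k * exp (μ k * x)))
                  + exp (l₁ * t) * ∫ x in t..s₀, (K * (exp (-(l₁*x)) * exp (-(a*x)))) * ψ x) := by
              rw [mul_add, hvs₀, hsplit, mul_add]
      -- the W part
      have hWpart : exp (l₁ * t) * ∫ x in t..s₀, exp (-(l₁*x)) * (K * ∑ k, β k * exp (μ k * x))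
          ≤ K * M₁ * (∑ k, β k * exp (μ k * t))
            + K * M₁ * (exp (l₁ * (t - s₀)) * (∑ k, β k * exp (μ k * s₀))) := by
        have heq1 : exp (l₁ * t) * ∫ x in t..s₀, exp (-(l₁*x)) * (K * ∑ k, β k * exp (μ k * x))
            = ∑ k, (K * β k) * ∫ x in t..s₀, exp (l₁*(t-x) + μ k * x) := by
          rw [← intervalIntegral.integral_const_mul]
          rw [show (fun x => exp (l₁ * t) * (exp (-(l₁*x)) * (K * ∑ k, β k * exp (μ k * x))))
              = fun x => ∑ k, (K * β k) * exp (l₁*(t-x) + μ k * x) by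
            funext x
            rw [Finset.mul_sum, Finset.mul_sum, Finset.mul_sum]
            apply Finset.sum_congr rfl
            intro k _
            rw [show l₁*(t-x) + μ k * x = l₁ * t + (-(l₁*x)) + μ k * x by ring,
              exp_add, exp_add]
            ring]
          rw [intervalIntegral.integral_finset_sum]
          · exact Finset.sum_congr rfl fun k _ => intervalIntegral.integral_const_mul _ _
          · intro k _
            exact ((Continuous.continuousOn (by fun_prop)).intervalIntegrable_of_Icc hts)
        rw [heq1]
        have hterm : ∀ k : ι, (K * β k) * ∫ x in t..s₀, exp (l₁*(t-x) + μ k * x)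
            ≤ (K * β k) * (M₁ * (exp (μ k * t) + exp (l₁*(t-s₀)) * exp (μ k * s₀))) := by
          intro k
          apply mul_le_mul_of_nonneg_left _ (mul_nonneg hK.le (hβ k))
          calc (∫ x in t..s₀, exp (l₁*(t-x) + μ k * x))
              ≤ (exp (μ k * t) + exp (l₁*(t-s₀)) * exp (μ k * s₀)) / |μ k - l₁| :=
                exp_int_bound l₁ (μ k) t s₀ (hμ₁ k) hts
            _ ≤ M₁ * (exp (μ k * t) + exp (l₁*(t-s₀)) * exp (μ k * s₀)) := by
                rw [div_eq_mul_one_div, mul_comm]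
                apply mul_le_mul_of_nonneg_right (hM₁k k)
                positivity
        calc (∑ k, (K * β k) * ∫ x in t..s₀, exp (l₁*(t-x) + μ k * x))
            ≤ ∑ k, (K * β k) * (M₁ * (exp (μ k * t) + exp (l₁*(t-s₀)) * exp (μ k * s₀))) :=
              Finset.sum_le_sum fun k _ => hterm k
          _ = ∑ k, (K * M₁ * (β k * exp (μ k * t))
                + K * M₁ * (exp (l₁ * (t - s₀)) * (β k * exp (μ k * s₀)))) :=
              Finset.sum_congr rfl fun k _ => by ring
          _ = _ := by
              rw [Finset.sum_add_distrib]
              congr 1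
              · rw [← Finset.mul_sum]
              · rw [← Finset.mul_sum, ← Finset.mul_sum]
      -- the ψ part
      have hψpart : exp (l₁ * t) * ∫ x in t..s₀, (K * (exp (-(l₁*x)) * exp (-(a*x)))) * ψ x
          ≤ K * (exp (l₁ * t) * (P (R-1) - P t)) := by
        have heq2 : (∫ x in t..s₀, (K * (exp (-(l₁*x)) * exp (-(a*x)))) * ψ x)
            = K * ∫ x in t..s₀, exp (-(l₁*x)) * (ψ x * exp (-(a*x))) := by
          rw [← intervalIntegral.integral_const_mul]
          congr 1
          funext x
          ring
        rw [heq2]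
        have hmono : (∫ x in t..s₀, exp (-(l₁*x)) * (ψ x * exp (-(a*x)))) ≤ P (R-1) - P t := by
          rw [intervalIntegral.integral_of_le hts, hPdiff t ht]
          have hsub1 : Ioc t s₀ ⊆ Icc (0:ℝ) (R-1) :=
            fun x hx => ⟨ht.1.trans hx.1.le, hx.2.trans hs₀S.2⟩
          have hsub2 : Ioc t (R-1) ⊆ Icc (0:ℝ) (R-1) :=
            fun x hx => ⟨ht.1.trans hx.1.le, hx.2⟩
          have hstep : (∫ x in Ioc t s₀, exp (-(l₁*x)) * (ψ x * exp (-(a*x))))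
              ≤ ∫ x in Ioc t (R-1), exp (-(l₁*x)) * (ψ x * exp (-(a*x))) := by
            apply setIntegral_mono_set (hggintψ.mono_set hsub2)
            · exact Filter.Eventually.of_forall fun x =>
                mul_nonneg (exp_pos _).le (mul_nonneg (hψ0 x) (exp_pos _).le)
            · exact HasSubset.Subset.eventuallyLE (Ioc_subset_Ioc_right hs₀S.2)
          have hcongr : (∫ x in Ioc t (R-1), exp (-(l₁*x)) * (ψ x * exp (-(a*x))))
              = ∫ x in Ioc t (R-1), exp (-(l₁*x)) * (ψ' x * exp (-(a*x))) := by
            apply integral_congr_ae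
            have := ae_restrict_of_ae_restrict_of_subset hsub2 hψeq
            filter_upwards [this] with x hx
            rw [hx]
          linarith [hstep, hcongr.symm.le, hcongr.le]
        rw [show K * (exp (l₁ * t) * (P (R-1) - P t))
            = exp (l₁ * t) * (K * (P (R-1) - P t)) by ring]
        apply mul_le_mul_of_nonneg_left _ (exp_pos _).le
        exact mul_le_mul_of_nonneg_left hmono hK.le
      -- combine
      have hA : exp (l₁ * (t - s₀)) * |u s₀|
          ≤ (2 + |l₂|) * (exp (2*l₁) * exp (l₁ * (t - R))) := by
        calc exp (l₁ * (t - s₀)) * |u s₀| ≤ exp (l₁ * (t - s₀)) * (2 + |l₂|) :=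
            mul_le_mul_of_nonneg_left hus₀ (exp_pos _).le
          _ ≤ (exp (2*l₁) * exp (l₁ * (t - R))) * (2 + |l₂|) :=
            mul_le_mul_of_nonneg_right hΛ (by positivity)
          _ = _ := by ring
      have hWs₀bd : K * M₁ * (exp (l₁ * (t - s₀)) * (∑ k, β k * exp (μ k * s₀)))
          ≤ K * M₁ * (K * (exp (2*l₁) * exp (l₁ * (t - R)))) := by
        apply mul_le_mul_of_nonneg_left _ (by positivity)
        calc exp (l₁ * (t - s₀)) * (∑ k, β k * exp (μ k * s₀))
            ≤ exp (l₁ * (t - s₀)) * K := mul_le_mul_of_nonneg_left hWs₀ (exp_pos _).le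
          _ ≤ (exp (2*l₁) * exp (l₁ * (t - R))) * K :=
            mul_le_mul_of_nonneg_right hΛ hK.le
          _ = _ := by ring
      have hc1 : (2 + |l₂|) * exp (2*l₁) + K * M₁ * (K * exp (2*l₁)) ≤ C₁ := by
        rw [hC₁def]
        nlinarith [mul_nonneg (show (0:ℝ) ≤ 2 + |l₂| by positivity)
            (sub_nonneg.2 (exp_le_exp.2 (show 2*l₁ ≤ 3*l₁ by linarith))),
          mul_pos hK hM₁pos, mul_pos (mul_pos hK hK) (exp_pos (3*l₁))]
      have hc2 : K * M₁ ≤ C₁ := by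
        rw [hC₁def]
        nlinarith [mul_pos (mul_pos hK hM₁pos) (mul_pos hK (exp_pos (2*l₁))),
          mul_nonneg (show (0:ℝ) ≤ 2 + |l₂| by positivity) (exp_pos (3*l₁)).le,
          mul_pos (mul_pos (mul_pos two_pos hK) hK) (exp_pos (3*l₁))]
      have e1 : ((2 + |l₂|) * exp (2*l₁) + K * M₁ * (K * exp (2*l₁))) * exp (l₁ * (t - R))
          ≤ C₁ * exp (l₁ * (t - R)) := mul_le_mul_of_nonneg_right hc1 hXpos.le
      have e2 : K * M₁ * (∑ k, β k * exp (μ k * t)) ≤ C₁ * (∑ k, β k * exp (μ k * t)) :=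
        mul_le_mul_of_nonneg_right hc2 hYnn
      linarith [hmain, hWpart, hψpart, hA, hWs₀bd, e1, e2]
    · -- s₀ < t
      have hts : s₀ ≤ t := hst.le
      have h1 : |v t| ≤ |v s₀| + ∫ x in s₀..t, (exp (-(l₁*x)) * (K * ∑ k, β k * exp (μ k * x))
          + (K * (exp (-(l₁*x)) * exp (-(a*x)))) * ψ x) := by
        have h := hvdiff s₀ t hs₀S ht hts
        have htri := abs_sub_abs_le_abs_sub (v t) (v s₀)
        linarith
      have hΛ2 : exp (l₁ * (t - s₀)) ≤ exp (3 * l₁) * exp (l₁ * (t - R)) := by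
        rw [← exp_add]
        apply exp_le_exp.2
        have := mul_le_mul_of_nonneg_left (show R - s₀ ≤ 3 by linarith [hs₀Ioo.1]) hl₁.le
        linarith
      have hbd2 : ∀ x ∈ Icc s₀ t, exp (-(l₁*x)) * (K * ∑ k, β k * exp (μ k * x))
          + (K * (exp (-(l₁*x)) * exp (-(a*x)))) * ψ x
          ≤ exp (-(l₁*s₀)) * (K * K) + (K * exp (-(l₁*s₀))) * ψ x := by
        intro x hx
        have hx1 : exp (-(l₁*x)) ≤ exp (-(l₁*s₀)) := exp_le_exp.2 (by
          have := mul_le_mul_of_nonneg_left hx.1 hl₁.le; linarith)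
        have hx2 : exp (-(a*x)) ≤ 1 := exp_le_one_iff.2
          (neg_nonpos.2 (mul_nonneg ha (hs₀S.1.trans hx.1)))
        have hWx : (∑ k, β k * exp (μ k * x)) ≤ K :=
          hWle x ⟨by linarith [hx.1, hs₀Ioo.1], by linarith [hx.2, ht.2]⟩
        have t1 : exp (-(l₁*x)) * (K * ∑ k, β k * exp (μ k * x))
            ≤ exp (-(l₁*s₀)) * (K * K) :=
          mul_le_mul hx1 (mul_le_mul_of_nonneg_left hWx hK.le)
            (mul_nonneg hK.le (hWnn x)) (exp_pos _).le
        have t2 : (K * (exp (-(l₁*x)) * exp (-(a*x)))) * ψ x ≤ (K * exp (-(l₁*s₀))) * ψ x := by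
          apply mul_le_mul_of_nonneg_right _ (hψ0 x)
          calc K * (exp (-(l₁*x)) * exp (-(a*x))) ≤ K * (exp (-(l₁*s₀)) * 1) := by
                apply mul_le_mul_of_nonneg_left _ hK.le
                exact mul_le_mul hx1 hx2 (exp_pos _).le (exp_pos _).le
            _ = K * exp (-(l₁*s₀)) := by ring
        linarith
      have hψint2 : IntervalIntegrable (fun x => (K * exp (-(l₁*s₀))) * ψ x) volume s₀ t := by
        rw [intervalIntegrable_iff_integrableOn_Icc_of_le hts]
        exact (hψint.mono_set (Icc_subset_Icc hs₀S.1 ht.2)).const_mul _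
      have hintRHS : IntervalIntegrable
          (fun x => exp (-(l₁*s₀)) * (K * K) + (K * exp (-(l₁*s₀))) * ψ x) volume s₀ t :=
        IntervalIntegrable.add intervalIntegrable_const hψint2
      have hψles : (∫ x in s₀..t, ψ x) ≤ K := by
        rw [intervalIntegral.integral_of_le hts]
        have hmono : (∫ x in Ioc s₀ t, ψ x) ≤ ∫ x in Icc 0 (R-1), ψ x := by
          apply setIntegral_mono_set hψint (Filter.Eventually.of_forall fun x => hψ0 x)
          exact HasSubset.Subset.eventuallyLE
            (fun x hx => ⟨by linarith [hx.1, hs₀S.1], by linarith [hx.2, ht.2]⟩)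
        linarith
      have hIbd2 : (∫ x in s₀..t, (exp (-(l₁*x)) * (K * ∑ k, β k * exp (μ k * x))
            + (K * (exp (-(l₁*x)) * exp (-(a*x)))) * ψ x))
          ≤ exp (-(l₁*s₀)) * (K*K) + (K * exp (-(l₁*s₀))) * K := by
        have hts1 : t - s₀ ≤ 1 := by linarith [ht.2, hs₀Ioo.1]
        have step1 : (∫ x in s₀..t, (exp (-(l₁*x)) * (K * ∑ k, β k * exp (μ k * x))
              + (K * (exp (-(l₁*x)) * exp (-(a*x)))) * ψ x))
            ≤ ∫ x in s₀..t, (exp (-(l₁*s₀)) * (K * K) + (K * exp (-(l₁*s₀))) * ψ x) :=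
          intervalIntegral.integral_mono_on hts (hintbnd s₀ t hs₀S ht hts) hintRHS hbd2
        have step2 : (∫ x in s₀..t, (exp (-(l₁*s₀)) * (K * K) + (K * exp (-(l₁*s₀))) * ψ x))
            = (t - s₀) * (exp (-(l₁*s₀)) * (K * K))
              + (K * exp (-(l₁*s₀))) * ∫ x in s₀..t, ψ x := by
          rw [intervalIntegral.integral_add intervalIntegrable_const hψint2,
            intervalIntegral.integral_const, intervalIntegral.integral_const_mul]
          simp [smul_eq_mul]
        have h3 : (t - s₀) * (exp (-(l₁*s₀)) * (K * K)) ≤ exp (-(l₁*s₀)) * (K*K) := by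
          have := mul_le_mul_of_nonneg_right hts1
            (mul_pos (exp_pos (-(l₁*s₀))) (mul_pos hK hK)).le
          linarith
        have h4 : (K * exp (-(l₁*s₀))) * (∫ x in s₀..t, ψ x) ≤ (K * exp (-(l₁*s₀))) * K :=
          mul_le_mul_of_nonneg_left hψles (by positivity)
        linarith
      have hmain2 : |u t| ≤ exp (l₁*(t-s₀)) * |u s₀|
          + exp (l₁*t) * (exp (-(l₁*s₀)) * (K*K) + (K * exp (-(l₁*s₀))) * K) := by
        rw [hut t, abs_mul, abs_of_pos (exp_pos _)]
        calc exp (l₁*t) * |v t|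
            ≤ exp (l₁*t) * (|v s₀| + (exp (-(l₁*s₀)) * (K*K) + (K * exp (-(l₁*s₀))) * K)) :=
              mul_le_mul_of_nonneg_left (by linarith) (exp_pos _).le
          _ = exp (l₁ * (t - s₀)) * |u s₀|
              + exp (l₁*t) * (exp (-(l₁*s₀)) * (K*K) + (K * exp (-(l₁*s₀))) * K) := by
              rw [mul_add, hvs₀]
      have hee : exp (l₁*t) * exp (-(l₁*s₀)) = exp (l₁*(t-s₀)) := by
        rw [← exp_add]; congr 1; ring
      have h2 : exp (l₁*t) * (exp (-(l₁*s₀)) * (K*K) + (K * exp (-(l₁*s₀))) * K)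
          = 2*K*K * exp (l₁*(t-s₀)) := by
        rw [show exp (l₁*t) * (exp (-(l₁*s₀)) * (K*K) + (K * exp (-(l₁*s₀))) * K)
          = 2*K*K * (exp (l₁*t) * exp (-(l₁*s₀))) by ring, hee]
      have l1 : exp (l₁*(t-s₀)) * |u s₀| ≤ exp (l₁*(t-s₀)) * (2+|l₂|) :=
        mul_le_mul_of_nonneg_left hus₀ (exp_pos _).le
      have l2 : exp (l₁*(t-s₀)) * (2+|l₂|) ≤ (exp (3*l₁) * exp (l₁*(t-R))) * (2+|l₂|) :=
        mul_le_mul_of_nonneg_right hΛ2 (by positivity)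
      have l3 : 2*K*K * exp (l₁*(t-s₀)) ≤ 2*K*K * (exp (3*l₁) * exp (l₁*(t-R))) :=
        mul_le_mul_of_nonneg_left hΛ2 (by positivity)
      have hc3 : ((2+|l₂|) + 2*K*K) * exp (3*l₁) ≤ C₁ := by
        rw [hC₁def]
        nlinarith [mul_pos hK hM₁pos, exp_pos (2*l₁),
          mul_pos (mul_pos hK hM₁pos) (mul_pos hK (exp_pos (2*l₁)))]
      have l4 : (((2+|l₂|) + 2*K*K) * exp (3*l₁)) * exp (l₁*(t-R)) ≤ C₁ * exp (l₁*(t-R)) :=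
        mul_le_mul_of_nonneg_right hc3 hXpos.le
      have l5 : 0 ≤ C₁ * (∑ k, β k * exp (μ k * t)) := mul_nonneg hC₁pos.le hYnn
      have l6 : 0 ≤ K * (exp (l₁ * t) * (P (R-1) - P t)) := mul_nonneg hK.le hPt
      linarith [hmain2, h2, l1, l2, l3, l4, l5, l6]
  -- Stage 2 : integrate up from 0
  set w : ℝ → ℝ := fun x => exp (-(l₂ * x)) * y x with hwdef
  have hederiv2 : ∀ x : ℝ, HasDerivAt (fun x => exp (-(l₂ * x))) (-l₂ * exp (-(l₂ * x))) x := by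
    intro x
    have h := (((hasDerivAt_id x).const_mul l₂).neg).exp
    simp only [id_eq, mul_one] at h
    convert h using 1
    · rfl
    change -l₂ * exp (-(l₂ * x)) = exp (-(l₂ * x)) * -l₂
    ring
  have hw : ∀ x ∈ Icc (0:ℝ) (R-1),
      HasDerivWithinAt w (exp (-(l₂ * x)) * u x) (Icc 0 (R-1)) x := by
    intro x hx
    have h := ((hederiv2 x).hasDerivWithinAt).mul (hdy x hx)
    convert h using 1
    case e'_9 =>
      change exp (-(l₂ * x)) * (y' x - l₂ * y x) = _
      ring
    all_goals rfl
  have hwcont' : ContinuousOn (fun x => exp (-(l₂ * x)) * u x) (Icc 0 (R-1)) :=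
    (Continuous.continuousOn (by fun_prop)).mul hucont
  have hftc2 := ftc_within w _ hw hwcont' h0S hrS hr0
  have hyr : y r = exp (l₂ * r) * w r := by
    rw [hwdef, ← mul_assoc, ← exp_add, show l₂*r + -(l₂*r) = 0 by ring, exp_zero, one_mul]
  have hw0 : w 0 = y 0 := by rw [hwdef]; norm_num
  have habs : |∫ x in (0:ℝ)..r, exp (-(l₂ * x)) * u x|
      ≤ ∫ x in (0:ℝ)..r, exp (-(l₂ * x)) * |u x| := by
    calc |∫ x in (0:ℝ)..r, exp (-(l₂ * x)) * u x|
        ≤ ∫ x in (0:ℝ)..r, |exp (-(l₂*x)) * u x| :=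
          intervalIntegral.abs_integral_le_integral_abs hr0
      _ = ∫ x in (0:ℝ)..r, exp (-(l₂*x)) * |u x| := by
          apply intervalIntegral.integral_congr
          intro x _
          show |exp (-(l₂*x)) * u x| = exp (-(l₂*x)) * |u x|
          rw [abs_mul, abs_of_pos (exp_pos _)]
  have hwr : |w r| ≤ |y 0| + ∫ x in (0:ℝ)..r, exp (-(l₂ * x)) * |u x| := by
    have htri := abs_sub_abs_le_abs_sub (w r) (w 0)
    have heq : |w r - y 0| = |∫ x in (0:ℝ)..r, exp (-(l₂ * x)) * u x| := by
      rw [← hw0, hftc2]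
    rw [hw0] at htri
    linarith
  have hsub0r : Icc (0:ℝ) r ⊆ Icc (0:ℝ) (R-1) := Icc_subset_Icc le_rfl hrR
  have hyrb : |y r| ≤ exp (l₂ * r) * |y 0| + ∫ x in (0:ℝ)..r, exp (l₂*(r-x)) * |u x| := by
    rw [hyr, abs_mul, abs_of_pos (exp_pos _)]
    have h1 : exp (l₂*r) * |w r|
        ≤ exp (l₂*r) * (|y 0| + ∫ x in (0:ℝ)..r, exp (-(l₂ * x)) * |u x|) :=
      mul_le_mul_of_nonneg_left hwr (exp_pos _).le
    have h2 : exp (l₂*r) * (∫ x in (0:ℝ)..r, exp (-(l₂*x)) * |u x|)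
        = ∫ x in (0:ℝ)..r, exp (l₂*(r-x)) * |u x| := by
      rw [← intervalIntegral.integral_const_mul]
      apply intervalIntegral.integral_congr
      intro x _
      show exp (l₂*r) * (exp (-(l₂*x)) * |u x|) = exp (l₂*(r-x)) * |u x|
      rw [← mul_assoc, ← exp_add]
      congr 2
      ring
    rw [mul_add, h2] at h1
    exact h1
  have hPcont' : ContinuousOn (fun x => P (R-1) - P x) (Icc 0 (R-1)) :=
    continuousOn_const.sub hPcont
  -- pointwise bound under the integral
  have hptw : ∀ x ∈ Icc (0:ℝ) r, exp (l₂*(r-x)) * |u x|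
      ≤ C₁ * (exp (l₂*(r-x)) * exp (l₁*(x-R)))
        + C₁ * (exp (l₂*(r-x)) * ∑ k, β k * exp (μ k * x))
        + (K * (exp (l₂*(r-x)) * exp (l₁*x))) * (P (R-1) - P x) := by
    intro x hx
    have hxS : x ∈ Icc (0:ℝ) (R-1) := hsub0r hx
    calc exp (l₂*(r-x)) * |u x|
        ≤ exp (l₂*(r-x)) * (C₁ * (exp (l₁ * (x - R)) + ∑ k, β k * exp (μ k * x))
            + K * (exp (l₁ * x) * (P (R-1) - P x))) :=
          mul_le_mul_of_nonneg_left (hubd x hxS) (exp_pos _).le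
      _ = _ := by ring
  have hI1 : IntervalIntegrable (fun x => C₁ * (exp (l₂*(r-x)) * exp (l₁*(x-R)))) volume 0 r :=
    (Continuous.continuousOn (by fun_prop)).intervalIntegrable_of_Icc hr0
  have hI2 : IntervalIntegrable (fun x => C₁ * (exp (l₂*(r-x)) * ∑ k, β k * exp (μ k * x)))
      volume 0 r :=
    (Continuous.continuousOn (continuous_const.mul
      ((by fun_prop : Continuous fun x : ℝ => exp (l₂*(r-x))).mul
        hWcont))).intervalIntegrable_of_Icc hr0
  have hI3 : IntervalIntegrable
      (fun x => (K * (exp (l₂*(r-x)) * exp (l₁*x))) * (P (R-1) - P x)) volume 0 r :=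
    ((Continuous.continuousOn (by fun_prop)).mul (hPcont'.mono hsub0r)).intervalIntegrable_of_Icc hr0
  have hLHSint : IntervalIntegrable (fun x => exp (l₂*(r-x)) * |u x|) volume 0 r :=
    ((Continuous.continuousOn (by fun_prop)).mul
      ((hucont.mono hsub0r).abs)).intervalIntegrable_of_Icc hr0
  have hTsum : (∫ x in (0:ℝ)..r, exp (l₂*(r-x)) * |u x|)
      ≤ (∫ x in (0:ℝ)..r, C₁ * (exp (l₂*(r-x)) * exp (l₁*(x-R))))
        + (∫ x in (0:ℝ)..r, C₁ * (exp (l₂*(r-x)) * ∑ k, β k * exp (μ k * x)))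
        + ∫ x in (0:ℝ)..r, (K * (exp (l₂*(r-x)) * exp (l₁*x))) * (P (R-1) - P x) := by
    have hmono := intervalIntegral.integral_mono_on hr0 hLHSint ((hI1.add hI2).add hI3) (by
      intro x hx
      have := hptw x hx
      linarith)
    rw [intervalIntegral.integral_add (hI1.add hI2) hI3,
      intervalIntegral.integral_add hI1 hI2] at hmono
    linarith
  -- T1
  have hT1 : (∫ x in (0:ℝ)..r, C₁ * (exp (l₂*(r-x)) * exp (l₁*(x-R))))
      ≤ (C₁/l₁) * exp (l₁*(r-R)) := by
    rw [intervalIntegral.integral_const_mul]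
    have ha1 : ∀ x ∈ Icc (0:ℝ) r, exp (l₂*(r-x)) * exp (l₁*(x-R)) ≤ exp (l₁*(x-R)) :=
      fun x hx => mul_le_of_le_one_left (exp_pos _).le
        (exp_le_one_iff.2 (mul_nonpos_of_nonpos_of_nonneg hl₂ (by linarith [hx.2])))
    have ha2 : (∫ x in (0:ℝ)..r, exp (l₂*(r-x)) * exp (l₁*(x-R)))
        ≤ ∫ x in (0:ℝ)..r, exp (l₁*(x-R)) :=
      intervalIntegral.integral_mono_on hr0
        ((Continuous.continuousOn (by fun_prop)).intervalIntegrable_of_Icc hr0)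
        ((Continuous.continuousOn (by fun_prop)).intervalIntegrable_of_Icc hr0) ha1
    have ha3 : (∫ x in (0:ℝ)..r, exp (l₁*(x-R)))
        = exp (-(l₁*R)) * ((exp (l₁*r) - exp (l₁*0))/l₁) := by
      rw [show (fun x => exp (l₁*(x-R))) = fun x => exp (-(l₁*R)) * exp (l₁*x) by
        funext x; rw [← exp_add]; congr 1; ring,
        intervalIntegral.integral_const_mul, int_exp_mul _ _ _ (ne_of_gt hl₁)]
    have ha4 : exp (-(l₁*R)) * ((exp (l₁*r) - exp (l₁*0))/l₁) ≤ exp (l₁*(r-R))/l₁ := by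
      rw [show exp (l₁*(r-R)) = exp (-(l₁*R)) * exp (l₁*r) by rw [← exp_add]; congr 1; ring,
        show exp (-(l₁*R)) * ((exp (l₁*r) - exp (l₁*0))/l₁)
          = (exp (-(l₁*R)) * (exp (l₁*r) - exp (l₁*0)))/l₁ by ring]
      apply div_le_div_of_nonneg_right _ hl₁.le
      nlinarith [mul_pos (exp_pos (-(l₁*R))) (exp_pos (l₁*0))]
    calc C₁ * ∫ x in (0:ℝ)..r, exp (l₂*(r-x)) * exp (l₁*(x-R))
        ≤ C₁ * (exp (l₁*(r-R))/l₁) := by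
          apply mul_le_mul_of_nonneg_left _ hC₁pos.le
          linarith
      _ = (C₁/l₁) * exp (l₁*(r-R)) := by ring
  -- T2
  have hT2 : (∫ x in (0:ℝ)..r, C₁ * (exp (l₂*(r-x)) * ∑ k, β k * exp (μ k * x)))
      ≤ C₁ * M₂ * (∑ k, β k * exp (μ k * r))
        + C₁ * M₂ * (exp (l₂*r) * (∑ k, β k * exp (μ k * 0))) := by
    have heq1 : (∫ x in (0:ℝ)..r, C₁ * (exp (l₂*(r-x)) * ∑ k, β k * exp (μ k * x)))
        = ∑ k, (C₁ * β k) * ∫ x in (0:ℝ)..r, exp (l₂*(r-x) + μ k * x) := by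
      rw [show (fun x => C₁ * (exp (l₂*(r-x)) * ∑ k, β k * exp (μ k * x)))
          = fun x => ∑ k, (C₁ * β k) * exp (l₂*(r-x) + μ k * x) by
        funext x
        rw [Finset.mul_sum, Finset.mul_sum]
        apply Finset.sum_congr rfl
        intro k _
        rw [exp_add]
        ring]
      rw [intervalIntegral.integral_finset_sum]
      · exact Finset.sum_congr rfl fun k _ => intervalIntegral.integral_const_mul _ _
      · intro k _
        exact (Continuous.continuousOn (by fun_prop)).intervalIntegrable_of_Icc hr0
    rw [heq1]
    have hterm : ∀ k : ι, (C₁ * β k) * ∫ x in (0:ℝ)..r, exp (l₂*(r-x) + μ k * x)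
        ≤ (C₁ * β k) * (M₂ * (exp (μ k * r) + exp (l₂*r) * exp (μ k * 0))) := by
      intro k
      apply mul_le_mul_of_nonneg_left _ (mul_nonneg hC₁pos.le (hβ k))
      calc (∫ x in (0:ℝ)..r, exp (l₂*(r-x) + μ k * x))
          ≤ (exp (μ k * r) + exp (l₂*r) * exp (μ k * 0)) / |μ k - l₂| :=
            exp_int_bound' l₂ (μ k) r (hμ₂ k) hr0
        _ ≤ M₂ * (exp (μ k * r) + exp (l₂*r) * exp (μ k * 0)) := by
            rw [div_eq_mul_one_div, mul_comm]
            apply mul_le_mul_of_nonneg_right (hM₂k k)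
            positivity
    calc (∑ k, (C₁ * β k) * ∫ x in (0:ℝ)..r, exp (l₂*(r-x) + μ k * x))
        ≤ ∑ k, (C₁ * β k) * (M₂ * (exp (μ k * r) + exp (l₂*r) * exp (μ k * 0))) :=
          Finset.sum_le_sum fun k _ => hterm k
      _ = ∑ k, (C₁ * M₂ * (β k * exp (μ k * r))
            + C₁ * M₂ * (exp (l₂*r) * (β k * exp (μ k * 0)))) :=
          Finset.sum_congr rfl fun k _ => by ring
      _ = _ := by
          rw [Finset.sum_add_distrib]
          congr 1
          · rw [← Finset.mul_sum]
          · rw [← Finset.mul_sum, ← Finset.mul_sum]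
  -- T3 via Tonelli
  have hT3 : (∫ x in (0:ℝ)..r, (K * (exp (l₂*(r-x)) * exp (l₁*x))) * (P (R-1) - P x))
      ≤ K * ((exp (l₂*r) + exp (-(a*r)))/(l₁ - l₂)) * ∫ s in Icc (0:ℝ) (R-1), ψ s := by
    rw [intervalIntegral.integral_of_le hr0, ← integral_Icc_eq_integral_Ioc]
    have heqn : EqOn (fun x => (K * (exp (l₂*(r-x)) * exp (l₁*x))) * (P (R-1) - P x))
        (fun x => K * (exp (l₂ * (r - x)) *
          (exp (l₁ * x) * ∫ s in Ioc x (R-1), exp (-(l₁ * s)) * (ψ' s * exp (-(a * s))))))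
        (Icc 0 r) := by
      intro x hx
      simp only
      rw [hPdiff x (hsub0r hx)]
      ring
    rw [setIntegral_congr_fun measurableSet_Icc heqn, integral_const_mul]
    have ht := tonelli_step l₁ l₂ a (R-1) r hl₁ hl₂ ha hr0 hrR ψ' hψ'm hψ'0 hψ'int
    rw [hIψ'] at ht
    calc K * ∫ x in Icc (0:ℝ) r, exp (l₂ * (r - x)) *
          (exp (l₁ * x) * ∫ s in Ioc x (R-1), exp (-(l₁ * s)) * (ψ' s * exp (-(a * s))))
        ≤ K * (((exp (l₂*r) + exp (-(a*r)))/(l₁ - l₂)) * ∫ s in Icc (0:ℝ) (R-1), ψ s) :=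
          mul_le_mul_of_nonneg_left ht hK.le
      _ = _ := by ring
  -- final assembly
  have hfinal : |y r| ≤ exp (l₂*r) * |y 0|
      + ((((C₁/l₁) * exp (l₁*(r-R)))
          + (C₁ * M₂ * (∑ k, β k * exp (μ k * r))
            + C₁ * M₂ * (exp (l₂*r) * (∑ k, β k * exp (μ k * 0)))))
        + K * ((exp (l₂*r) + exp (-(a*r)))/(l₁ - l₂)) * ∫ s in Icc (0:ℝ) (R-1), ψ s) :=
    hyrb.trans (add_le_add_right (hTsum.trans
      (add_le_add (add_le_add hT1 hT2) hT3)) _)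
  have hC1le : 1 ≤ C := by
    rw [hCdef]
    have h1 : 0 < C₁ / l₁ := div_pos hC₁pos hl₁
    have h2 : 0 < C₁ * M₂ := mul_pos hC₁pos hM₂pos
    have h3 : 0 < K / (l₁ - l₂) := div_pos hK hl₁l₂
    linarith
  have hA1 : C₁/l₁ ≤ C := by
    rw [hCdef]
    have h2 : 0 < C₁ * M₂ := mul_pos hC₁pos hM₂pos
    have h3 : 0 < K / (l₁ - l₂) := div_pos hK hl₁l₂
    linarith
  have hA2 : C₁*M₂ ≤ C := by
    rw [hCdef]
    have h1 : 0 < C₁ / l₁ := div_pos hC₁pos hl₁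
    have h3 : 0 < K / (l₁ - l₂) := div_pos hK hl₁l₂
    linarith
  have hA3 : K/(l₁ - l₂) ≤ C := by
    rw [hCdef]
    have h1 : 0 < C₁ / l₁ := div_pos hC₁pos hl₁
    have h2 : 0 < C₁ * M₂ := mul_pos hC₁pos hM₂pos
    linarith
  have f1 : exp (l₂*r) * |y 0| ≤ C * (exp (l₂*r) * |y 0|) :=
    le_mul_of_one_le_left (by positivity) hC1le
  have f2 : (C₁/l₁) * exp (l₁*(r-R)) ≤ C * exp (l₁*(r-R)) :=
    mul_le_mul_of_nonneg_right hA1 (exp_pos _).le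
  have f3 : C₁*M₂ * (∑ k, β k * exp (μ k * r)) ≤ C * (∑ k, β k * exp (μ k * r)) :=
    mul_le_mul_of_nonneg_right hA2 (hWnn r)
  have f4 : C₁*M₂ * (exp (l₂*r) * (∑ k, β k * exp (μ k * 0)))
      ≤ C * (exp (l₂*r) * (∑ k, β k * exp (μ k * 0))) :=
    mul_le_mul_of_nonneg_right hA2 (mul_nonneg (exp_pos _).le (hWnn 0))
  have f5a : (K/(l₁ - l₂)) * (exp (l₂*r) * ∫ s in Icc (0:ℝ) (R-1), ψ s)
      ≤ C * (exp (l₂*r) * ∫ s in Icc (0:ℝ) (R-1), ψ s) :=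
    mul_le_mul_of_nonneg_right hA3 (mul_nonneg (exp_pos _).le hIψ0)
  have f5b : (K/(l₁ - l₂)) * ((∫ s in Icc (0:ℝ) (R-1), ψ s) * exp (-(a*r)))
      ≤ C * ((∫ s in Icc (0:ℝ) (R-1), ψ s) * exp (-(a*r))) :=
    mul_le_mul_of_nonneg_right hA3 (mul_nonneg hIψ0 (exp_pos _).le)
  have f5eq : K * ((exp (l₂*r) + exp (-(a*r)))/(l₁ - l₂)) * ∫ s in Icc (0:ℝ) (R-1), ψ s
      = (K/(l₁ - l₂)) * (exp (l₂*r) * ∫ s in Icc (0:ℝ) (R-1), ψ s)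
        + (K/(l₁ - l₂)) * ((∫ s in Icc (0:ℝ) (R-1), ψ s) * exp (-(a*r))) := by ring
  have f5 : K * ((exp (l₂*r) + exp (-(a*r)))/(l₁ - l₂)) * ∫ s in Icc (0:ℝ) (R-1), ψ s
      ≤ C * (exp (l₂*r) * ∫ s in Icc (0:ℝ) (R-1), ψ s)
        + C * ((∫ s in Icc (0:ℝ) (R-1), ψ s) * exp (-(a*r))) := by
    rw [f5eq]
    exact add_le_add f5a f5b
  calc |y r| ≤ _ := hfinal
    _ ≤ C * (exp (l₂*r) * |y 0|)
        + (((C * exp (l₁*(r-R)))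
            + (C * (∑ k, β k * exp (μ k * r))
              + C * (exp (l₂*r) * (∑ k, β k * exp (μ k * 0)))))
          + (C * (exp (l₂*r) * ∫ s in Icc (0:ℝ) (R-1), ψ s)
            + C * ((∫ s in Icc (0:ℝ) (R-1), ψ s) * exp (-(a*r))))) :=
      add_le_add f1 (add_le_add (add_le_add f2 (add_le_add f3 f4)) f5)
    _ = C * (exp (l₂ * r) * (|y 0| + (∑ k, β k * exp (μ k * 0))
          + ∫ s in Icc (0 : ℝ) (R - 1), ψ s)
        + exp (l₁ * (r - R))
        + (∑ k, β k * exp (μ k * r))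
        + (∫ s in Icc (0 : ℝ) (R - 1), ψ s) * exp (-(a * r))) := by ring
end

section
/- Equip T² × ℝ with a hyperbolic cusp metric g = e^{−2r} g_Flat + dr². Let h be a C² symmetric (0,2)-tensor field depending only on r which solves (1/2)Δ_L h + 2h = 0 and satisfies |h|(r) ≤ C(e^{−λ r} + e^{λ r}) for some C > 0 and λ ∈ (0,1). Then h is a trivial Einstein variation, i.e. h = e^{−2r} u_{ij} dx^i dx^j with constants u_{ij} (i,j ∈ {1,2}) satisfying u₁₁ + u₂₂ = 0. If moreover |h|(r) ≤ C e^{−λ r} for all r ∈ ℝ or |h|(r) ≤ C e^{λ r} for all r ∈ ℝ, then h = 0. -/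
noncomputable section

namespace CuspODE

/-- Partial derivative in the coordinate direction `i` of a quantity depending only on the
cusp coordinate `r` (the coordinate with index `2`). -/
def pdr (i : Fin 3) (f : ℝ → ℝ) (r : ℝ) : ℝ := if i = 2 then deriv f r else 0

/-- Components of the cusp metric `g = e^{-2r}(dx₁² + dx₂²) + dr²` in cusp coordinates. -/
def gmet (r : ℝ) (i j : Fin 3) : ℝ :=
  if i = j then (if i = 2 then 1 else Real.exp (-(2 * r))) else 0

/-- Components of the inverse of the cusp metric. -/
def ginv (r : ℝ) (i j : Fin 3) : ℝ :=
  if i = j then (if i = 2 then 1 else Real.exp (2 * r)) else 0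

/-- Christoffel symbols `Γ^k_{ij}` of the cusp metric. -/
def chr (r : ℝ) (k i j : Fin 3) : ℝ :=
  (1 / 2) * ∑ l, ginv r k l *
    (pdr i (fun s => gmet s j l) r + pdr j (fun s => gmet s i l) r -
      pdr l (fun s => gmet s i j) r)

/-- Component on `∂_l` of the curvature `R(∂_i, ∂_j)∂_k` of the cusp metric. -/
def curv (r : ℝ) (i j k l : Fin 3) : ℝ :=
  pdr i (fun s => chr s l j k) r - pdr j (fun s => chr s l i k) r +
    ∑ m, (chr r l i m * chr r m j k - chr r l j m * chr r m i k)

/-- Component on `∂_l` of the Ricci endomorphism `Ric(∂_a) = ∑ᵢ R(∂_a, eᵢ)eᵢ`. -/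
def ricEnd (r : ℝ) (a l : Fin 3) : ℝ := ∑ i, ∑ j, ginv r i j * curv r a i j l

/-- First covariant derivative `(∇h)_{ij;k}` of an `r`-dependent symmetric `(0,2)`-tensor. -/
def cov1 (H : ℝ → Fin 3 → Fin 3 → ℝ) (r : ℝ) (i j k : Fin 3) : ℝ :=
  pdr k (fun s => H s i j) r - (∑ l, chr r l k i * H r l j) - ∑ l, chr r l k j * H r i l

/-- Second covariant derivative `(∇²h)_{ij;k;m}`. -/
def cov2 (H : ℝ → Fin 3 → Fin 3 → ℝ) (r : ℝ) (i j k m : Fin 3) : ℝ :=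
  pdr m (fun s => cov1 H s i j k) r - (∑ l, chr r l m i * cov1 H r l j k) -
    (∑ l, chr r l m j * cov1 H r i l k) - ∑ l, chr r l m k * cov1 H r i j l

/-- Connection Laplacian `Δ h = ∇*∇ h = -tr_g ∇² h`. -/
def connLap (H : ℝ → Fin 3 → Fin 3 → ℝ) (r : ℝ) (i j : Fin 3) : ℝ :=
  -(∑ k, ∑ m, ginv r k m * cov2 H r i j k m)

/-- Weitzenböck curvature operator
`Ric(h)(x,y) = h(Ric x, y) + h(x, Ric y) - 2 tr_g h(·, R(·,x)y)`. -/
def ricOp (H : ℝ → Fin 3 → Fin 3 → ℝ) (r : ℝ) (a b : Fin 3) : ℝ :=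
  (∑ l, ricEnd r a l * H r l b) + (∑ l, ricEnd r b l * H r a l) -
    2 * ∑ c, ∑ d, ginv r c d * ∑ l, curv r d a b l * H r c l

/-- Lichnerowicz Laplacian `Δ_L h = ∇*∇ h + Ric(h)`. -/
def lichLap (H : ℝ → Fin 3 → Fin 3 → ℝ) (r : ℝ) (i j : Fin 3) : ℝ :=
  connLap H r i j + ricOp H r i j

/-- Pointwise norm `|h|` of an `r`-dependent symmetric `(0,2)`-tensor with respect to the
cusp metric. -/
def tensorNorm (H : ℝ → Fin 3 → Fin 3 → ℝ) (r : ℝ) : ℝ :=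
  Real.sqrt (∑ i, ∑ j, ∑ a, ∑ b, ginv r i a * ginv r j b * H r i j * H r a b)

end CuspODE

section Aux
open Real CuspODE

lemma hasDerivAt_expc (c r : ℝ) : HasDerivAt (fun s : ℝ => Real.exp (c * s)) (c * Real.exp (c * r)) r := by
  simpa [mul_comm] using ((hasDerivAt_id r).const_mul c).exp

lemma hasDerivAt_expNeg2 (r : ℝ) :
    HasDerivAt (fun s : ℝ => Real.exp (-(2 * s))) (-2 * Real.exp (-(2 * r))) r := by
  have h := hasDerivAt_expc (-2) r
  simpa [neg_mul, mul_comm] using h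

lemma deriv_gmet (i j : Fin 3) (r : ℝ) :
    deriv (fun s => gmet s i j) r = if i = j ∧ i ≠ 2 then -2 * Real.exp (-(2 * r)) else 0 := by
  by_cases h : i = j
  · subst h
    by_cases h2 : i = 2
    · have : (fun s => gmet s i i) = fun _ => (1 : ℝ) := by funext s; simp [gmet, h2]
      rw [this]; simp [h2]
    · have : (fun s => gmet s i i) = fun s => Real.exp (-(2 * s)) := by
        funext s; simp [gmet, h2]
      rw [this, (hasDerivAt_expNeg2 r).deriv]; simp [h2]
  · have : (fun s => gmet s i j) = fun _ => (0 : ℝ) := by funext s; simp [gmet, h]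
    rw [this]; simp [h]

lemma chr_eq (r : ℝ) (k i j : Fin 3) :
    chr r k i j =
      if k = 2 ∧ i = j ∧ i ≠ 2 then Real.exp (-(2 * r))
      else if (i = 2 ∧ j = k ∧ k ≠ 2) ∨ (j = 2 ∧ i = k ∧ k ≠ 2) then -1 else 0 := by
  fin_cases k <;> fin_cases i <;> fin_cases j <;>
    simp [chr, ginv, pdr, deriv_gmet, Fin.sum_univ_three] <;> ring_nf <;>
    simp [← Real.exp_add]

end Aux
section Aux2
open Real CuspODE

lemma deriv_chr (k i j : Fin 3) (r : ℝ) :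
    deriv (fun s => chr s k i j) r =
      if k = 2 ∧ i = j ∧ i ≠ 2 then -2 * Real.exp (-(2 * r)) else 0 := by
  by_cases h : k = 2 ∧ i = j ∧ i ≠ 2
  · rw [if_pos h]
    obtain ⟨hk, hij, hi2⟩ := h
    subst hk; subst hij
    have hfun : (fun s => chr s 2 i i) = fun s => Real.exp (-(2 * s)) := by
      funext s; rw [chr_eq]; simp [hi2]
    rw [hfun, (hasDerivAt_expNeg2 r).deriv]
  · rw [if_neg h]
    by_cases h2 : (i = 2 ∧ j = k ∧ k ≠ 2) ∨ (j = 2 ∧ i = k ∧ k ≠ 2)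
    · have hfun : (fun s => chr s k i j) = fun _ => (-1 : ℝ) := by
        funext s; rw [chr_eq]; simp [h, h2]
      rw [hfun]; simp
    · have hfun : (fun s => chr s k i j) = fun _ => (0 : ℝ) := by
        funext s; rw [chr_eq]; simp [h, h2]
      rw [hfun]; simp

lemma curv_eq (r : ℝ) (i j k l : Fin 3) :
    curv r i j k l = (if l = j then gmet r i k else 0) - (if l = i then gmet r j k else 0) := by
  fin_cases i <;> fin_cases j <;> fin_cases k <;> fin_cases l <;>
    simp [curv, pdr, Fin.sum_univ_three, deriv_chr] <;>
    simp [chr_eq, gmet] <;> ring_nf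

lemma ricEnd_eq (r : ℝ) (a l : Fin 3) :
    ricEnd r a l = if a = l then -2 else 0 := by
  fin_cases a <;> fin_cases l <;>
    simp [ricEnd, curv_eq, ginv, gmet, Fin.sum_univ_three] <;> ring_nf <;>
    norm_num [← Real.exp_add]

end Aux2
section Aux3
open Real CuspODE

variable {H : ℝ → Fin 3 → Fin 3 → ℝ}

lemma cov1_eq (r : ℝ) (i j k : Fin 3) :
    cov1 H r i j k =
      (if k = 2 then deriv (fun s => H s i j) r else 0)
      - (if k = i ∧ k ≠ 2 then Real.exp (-(2 * r)) * H r 2 j else 0)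
      + (if k = 2 ∧ i ≠ 2 then H r i j else 0)
      + (if i = 2 ∧ k ≠ 2 then H r k j else 0)
      - (if k = j ∧ k ≠ 2 then Real.exp (-(2 * r)) * H r i 2 else 0)
      + (if k = 2 ∧ j ≠ 2 then H r i j else 0)
      + (if j = 2 ∧ k ≠ 2 then H r i k else 0) := by
  fin_cases i <;> fin_cases j <;> fin_cases k <;>
    simp [cov1, pdr, chr_eq, Fin.sum_univ_three] <;> ring

end Aux3
section Aux4
open Real CuspODE

variable {H : ℝ → Fin 3 → Fin 3 → ℝ}

lemma diffH (hs : ∀ i j, ContDiff ℝ 2 fun r => H r i j) (i j : Fin 3) :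
    Differentiable ℝ fun r => H r i j := (hs i j).differentiable (by norm_num)

lemma contDiffDerivH (hs : ∀ i j, ContDiff ℝ 2 fun r => H r i j) (i j : Fin 3) :
    ContDiff ℝ 1 (deriv fun r => H r i j) := by
  have h : ContDiff ℝ ((1 : ℕ) + 1) fun r => H r i j := by
    have := hs i j
    norm_num at this ⊢
    exact_mod_cast this
  exact_mod_cast (contDiff_succ_iff_deriv.mp h).2.2

lemma diffDerivH (hs : ∀ i j, ContDiff ℝ 2 fun r => H r i j) (i j : Fin 3) :
    Differentiable ℝ (deriv fun r => H r i j) :=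
  (contDiffDerivH hs i j).differentiable one_ne_zero

lemma deriv_cov1_2 (hs : ∀ i j, ContDiff ℝ 2 fun r => H r i j) (i j : Fin 3) (r : ℝ) :
    deriv (fun s => cov1 H s i j 2) r =
      deriv (deriv (fun s => H s i j)) r
        + (((if i ≠ 2 then 1 else 0) + (if j ≠ 2 then 1 else 0)) : ℝ) * deriv (fun s => H s i j) r := by
  have hfun : (fun s => cov1 H s i j 2)
      = fun s => deriv (fun t => H t i j) s
          + (((if i ≠ 2 then 1 else 0) + (if j ≠ 2 then 1 else 0)) : ℝ) * H s i j := by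
    funext s
    rw [cov1_eq]
    by_cases hi : i = 2 <;> by_cases hj : j = 2 <;> simp [hi, hj] <;> ring
  rw [hfun, deriv_fun_add (diffDerivH hs i j r) (((diffH hs i j).const_mul _) r),
    deriv_const_mul _ (diffH hs i j r)]

end Aux4
section Aux5
open Real CuspODE

variable {H : ℝ → Fin 3 → Fin 3 → ℝ}

lemma lich00 (hs : ∀ i j, ContDiff ℝ 2 fun r => H r i j) (r : ℝ) :
    lichLap H r 0 0 = -(deriv (deriv (fun s => H s 0 0)) r) - 2 * deriv (fun s => H s 0 0) r
      - 4 * H r 0 0 + 2 * (H r 0 0 + H r 1 1) := by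
  simp [lichLap, connLap, ricOp, cov2, pdr, ginv, Fin.sum_univ_three, deriv_cov1_2 hs,
    ricEnd_eq, curv_eq, gmet]
  simp [cov1_eq, chr_eq]
  simp only [Real.exp_neg]
  field_simp
  ring

lemma lich11 (hs : ∀ i j, ContDiff ℝ 2 fun r => H r i j) (r : ℝ) :
    lichLap H r 1 1 = -(deriv (deriv (fun s => H s 1 1)) r) - 2 * deriv (fun s => H s 1 1) r
      - 4 * H r 1 1 + 2 * (H r 0 0 + H r 1 1) := by
  simp [lichLap, connLap, ricOp, cov2, pdr, ginv, Fin.sum_univ_three, deriv_cov1_2 hs,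
    ricEnd_eq, curv_eq, gmet]
  simp [cov1_eq, chr_eq]
  simp only [Real.exp_neg]
  field_simp
  ring

lemma lich01 (hs : ∀ i j, ContDiff ℝ 2 fun r => H r i j)
    (hsym : ∀ r i j, H r i j = H r j i) (r : ℝ) :
    lichLap H r 0 1 = -(deriv (deriv (fun s => H s 0 1)) r) - 2 * deriv (fun s => H s 0 1) r
      - 4 * H r 0 1 := by
  simp [lichLap, connLap, ricOp, cov2, pdr, ginv, Fin.sum_univ_three, deriv_cov1_2 hs,
    ricEnd_eq, curv_eq, gmet]
  simp [cov1_eq, chr_eq, hsym r 1 0, hsym r 2 0, hsym r 2 1]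
  simp only [Real.exp_neg]
  field_simp
  ring

lemma lich02 (hs : ∀ i j, ContDiff ℝ 2 fun r => H r i j)
    (hsym : ∀ r i j, H r i j = H r j i) (r : ℝ) :
    lichLap H r 0 2 = -(deriv (deriv (fun s => H s 0 2)) r) := by
  simp [lichLap, connLap, ricOp, cov2, pdr, ginv, Fin.sum_univ_three, deriv_cov1_2 hs,
    ricEnd_eq, curv_eq, gmet]
  simp [cov1_eq, chr_eq, hsym r 1 0, hsym r 2 0, hsym r 2 1]
  simp only [Real.exp_neg]
  field_simp
  ring

lemma lich12 (hs : ∀ i j, ContDiff ℝ 2 fun r => H r i j)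
    (hsym : ∀ r i j, H r i j = H r j i) (r : ℝ) :
    lichLap H r 1 2 = -(deriv (deriv (fun s => H s 1 2)) r) := by
  simp [lichLap, connLap, ricOp, cov2, pdr, ginv, Fin.sum_univ_three, deriv_cov1_2 hs,
    ricEnd_eq, curv_eq, gmet]
  simp [cov1_eq, chr_eq, hsym r 1 0, hsym r 2 0, hsym r 2 1]
  simp only [Real.exp_neg]
  field_simp
  ring

lemma lich22 (hs : ∀ i j, ContDiff ℝ 2 fun r => H r i j)
    (hsym : ∀ r i j, H r i j = H r j i) (r : ℝ) :
    lichLap H r 2 2 = -(deriv (deriv (fun s => H s 2 2)) r) + 2 * deriv (fun s => H s 2 2) r := by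
  simp [lichLap, connLap, ricOp, cov2, pdr, ginv, Fin.sum_univ_three, deriv_cov1_2 hs,
    ricEnd_eq, curv_eq, gmet]
  simp [cov1_eq, chr_eq, hsym r 1 0, hsym r 2 0, hsym r 2 1]
  simp only [Real.exp_neg]
  field_simp
  ring

end Aux5
section ODE
open Real

lemma diff_expc (c : ℝ) : Differentiable ℝ fun s : ℝ => Real.exp (c * s) :=
  fun x => (hasDerivAt_expc c x).differentiableAt

lemma ode_first {f : ℝ → ℝ} (hf : Differentiable ℝ f) (c : ℝ)
    (h : ∀ r, deriv f r = c * f r) : ∀ r, f r = f 0 * Real.exp (c * r) := by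
  have key : ∀ r, f r * Real.exp (-c * r) = f 0 := by
    intro r
    have hg : Differentiable ℝ fun s => f s * Real.exp (-c * s) := hf.mul (diff_expc (-c))
    have hg' : ∀ s, deriv (fun s => f s * Real.exp (-c * s)) s = 0 := by
      intro s
      rw [deriv_fun_mul (hf s) ((diff_expc (-c)) s), (hasDerivAt_expc (-c) s).deriv, h s]
      ring
    have := is_const_of_deriv_eq_zero hg hg' r 0
    simpa using this
  intro r
  have h1 := key r
  have h2 : Real.exp (-c * r) * Real.exp (c * r) = 1 := by
    rw [← Real.exp_add]; ring_nf; exact Real.exp_zero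
  calc f r = f r * (Real.exp (-c * r) * Real.exp (c * r)) := by rw [h2]; ring
    _ = (f r * Real.exp (-c * r)) * Real.exp (c * r) := by ring
    _ = f 0 * Real.exp (c * r) := by rw [h1]

lemma ode_second {f : ℝ → ℝ} (hf : Differentiable ℝ f)
    (hf' : Differentiable ℝ (deriv f)) (r1 r2 : ℝ) (hne : r1 ≠ r2)
    (hode : ∀ r, deriv (deriv f) r = (r1 + r2) * deriv f r - (r1 * r2) * f r) :
    ∃ A B : ℝ, ∀ r, f r = A * Real.exp (r1 * r) + B * Real.exp (r2 * r) := by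
  set u : ℝ → ℝ := fun r => deriv f r - r2 * f r with hu_def
  have hu : Differentiable ℝ u := hf'.sub (hf.const_mul r2)
  have hu' : ∀ r, deriv u r = r1 * u r := by
    intro r
    rw [hu_def]
    rw [deriv_fun_sub (hf' r) ((hf.const_mul r2) r), deriv_const_mul r2 (hf r), hode r]
    simp only [u]
    ring
  have husol := ode_first hu r1 hu'
  set K : ℝ := u 0 / (r1 - r2) with hK_def
  have hsub : r1 - r2 ≠ 0 := sub_ne_zero.mpr hne
  set g : ℝ → ℝ := fun r => f r - K * Real.exp (r1 * r) with hg_def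
  have hg : Differentiable ℝ g := hf.sub ((diff_expc r1).const_mul K)
  have hg' : ∀ r, deriv g r = r2 * g r := by
    intro r
    rw [hg_def]
    rw [deriv_fun_sub (hf r) (((diff_expc r1).const_mul K) r), deriv_const_mul K ((diff_expc r1) r),
      (hasDerivAt_expc r1 r).deriv]
    have hdf : deriv f r = u 0 * Real.exp (r1 * r) + r2 * f r := by
      have h0 : deriv f r - r2 * f r = u 0 * Real.exp (r1 * r) := husol r
      linarith
    rw [hdf]
    simp only [g]
    have hKm : K * (r1 - r2) = u 0 := by rw [hK_def]; exact div_mul_cancel₀ _ hsub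
    linear_combination (-(Real.exp (r1 * r))) * hKm
  have hgsol := ode_first hg r2 hg'
  refine ⟨K, g 0, fun r => ?_⟩
  have h0 : f r - K * Real.exp (r1 * r) = g 0 * Real.exp (r2 * r) := hgsol r
  linarith

end ODE
section Growth
open Real Filter

lemma exp_tendsto_zero {c : ℝ} (hc : c < 0) :
    Tendsto (fun r : ℝ => Real.exp (c * r)) atTop (nhds 0) := by
  apply Real.tendsto_exp_atBot.comp
  have h1 : Tendsto (fun r : ℝ => (-c) * r) atTop atTop :=
    Tendsto.const_mul_atTop (by linarith) tendsto_id
  have h2 : Tendsto (fun r : ℝ => -((-c) * r)) atTop atBot := tendsto_neg_atBot_iff.mpr h1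
  convert h2 using 2 with r
  ring

lemma kill_top {A B mu nu lam C : ℝ} (hnu : nu < mu) (hlam : lam < mu) (hlam0 : 0 < lam)
    (hb : ∀ r, |A * Real.exp (mu * r) + B * Real.exp (nu * r)|
      ≤ C * (Real.exp (-(lam * r)) + Real.exp (lam * r))) : A = 0 := by
  have key : ∀ r, |A| ≤ C * Real.exp ((-lam - mu) * r) + C * Real.exp ((lam - mu) * r)
      + |B| * Real.exp ((nu - mu) * r) := by
    intro r
    have e1 : (0:ℝ) < Real.exp (mu * r) := Real.exp_pos _
    have h2 : |A| * Real.exp (mu * r)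
        ≤ C * (Real.exp (-(lam * r)) + Real.exp (lam * r)) + |B| * Real.exp (nu * r) := by
      have habs : |A * Real.exp (mu * r)|
          ≤ |A * Real.exp (mu * r) + B * Real.exp (nu * r)| + |B * Real.exp (nu * r)| := by
        have := abs_add_le (A * Real.exp (mu * r) + B * Real.exp (nu * r)) (-(B * Real.exp (nu * r)))
        simpa using this
      rw [abs_mul, abs_of_pos e1] at habs
      rw [abs_mul, abs_of_pos (Real.exp_pos (nu * r))] at habs
      linarith [hb r]
    have e2 : (0:ℝ) < Real.exp (-(mu * r)) := Real.exp_pos _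
    have h3 := mul_le_mul_of_nonneg_right h2 e2.le
    calc |A| = |A| * Real.exp (mu * r) * Real.exp (-(mu * r)) := by
          rw [mul_assoc, ← Real.exp_add]; simp
      _ ≤ (C * (Real.exp (-(lam * r)) + Real.exp (lam * r)) + |B| * Real.exp (nu * r))
            * Real.exp (-(mu * r)) := h3
      _ = C * Real.exp ((-lam - mu) * r) + C * Real.exp ((lam - mu) * r)
            + |B| * Real.exp ((nu - mu) * r) := by
          rw [show (-lam - mu) * r = -(lam * r) + -(mu * r) by ring,
            show (lam - mu) * r = lam * r + -(mu * r) by ring,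
            show (nu - mu) * r = nu * r + -(mu * r) by ring,
            Real.exp_add, Real.exp_add, Real.exp_add]
          ring
  have htend : Tendsto (fun r => C * Real.exp ((-lam - mu) * r) + C * Real.exp ((lam - mu) * r)
      + |B| * Real.exp ((nu - mu) * r)) atTop (nhds 0) := by
    have t1 := (exp_tendsto_zero (show -lam - mu < 0 by linarith)).const_mul C
    have t2 := (exp_tendsto_zero (show lam - mu < 0 by linarith)).const_mul C
    have t3 := (exp_tendsto_zero (show nu - mu < 0 by linarith)).const_mul |B|
    have := (t1.add t2).add t3
    simpa using this
  have : |A| ≤ 0 := ge_of_tendsto htend (Filter.Eventually.of_forall key)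
  exact abs_eq_zero.mp (le_antisymm this (abs_nonneg A))

lemma kill_bot {A B mu nu lam C : ℝ} (hnu : nu < mu) (hlam : nu < -lam) (hlam0 : 0 < lam)
    (hb : ∀ r, |A * Real.exp (mu * r) + B * Real.exp (nu * r)|
      ≤ C * (Real.exp (-(lam * r)) + Real.exp (lam * r))) : B = 0 := by
  apply kill_top (A := B) (B := A) (mu := -nu) (nu := -mu) (lam := lam) (C := C)
    (by linarith) (by linarith) hlam0
  intro r
  have h := hb (-r)
  rw [show mu * (-r) = (-mu) * r by ring, show nu * (-r) = (-nu) * r by ring,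
    show -(lam * (-r)) = lam * r by ring, show lam * (-r) = -(lam * r) by ring] at h
  calc |B * Real.exp (-nu * r) + A * Real.exp (-mu * r)|
      = |A * Real.exp (-mu * r) + B * Real.exp (-nu * r)| := by rw [add_comm]
    _ ≤ C * (Real.exp (lam * r) + Real.exp (-(lam * r))) := h
    _ = C * (Real.exp (-(lam * r)) + Real.exp (lam * r)) := by ring

lemma const_kill_top {x lam C : ℝ} (hlam : 0 < lam)
    (hb : ∀ r, |x| ≤ C * Real.exp (-(lam * r))) : x = 0 := by
  have htend : Tendsto (fun r => C * Real.exp ((-lam) * r)) atTop (nhds 0) := by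
    simpa using (exp_tendsto_zero (show -lam < 0 by linarith)).const_mul C
  have key : ∀ r : ℝ, |x| ≤ C * Real.exp ((-lam) * r) := by
    intro r; have := hb r; rwa [show -(lam * r) = (-lam) * r by ring] at this
  have : |x| ≤ 0 := ge_of_tendsto htend (Filter.Eventually.of_forall key)
  exact abs_eq_zero.mp (le_antisymm this (abs_nonneg x))

lemma const_kill_bot {x lam C : ℝ} (hlam : 0 < lam)
    (hb : ∀ r, |x| ≤ C * Real.exp (lam * r)) : x = 0 := by
  apply const_kill_top hlam (C := C)
  intro r
  have := hb (-r)
  rwa [show lam * (-r) = -(lam * r) by ring] at this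

end Growth
section Bounds
open Real CuspODE

variable {H : ℝ → Fin 3 → Fin 3 → ℝ}

lemma inner_expand (hsym : ∀ r i j, H r i j = H r j i) (r : ℝ) :
    (∑ i, ∑ j, ∑ a, ∑ b, ginv r i a * ginv r j b * H r i j * H r a b)
    = (Real.exp (2*r) * H r 0 0)^2 + (Real.exp (2*r) * H r 1 1)^2
      + 2*(Real.exp (2*r) * H r 0 1)^2 + 2*Real.exp (2*r) * (H r 0 2)^2
      + 2*Real.exp (2*r) * (H r 1 2)^2 + (H r 2 2)^2 := by
  simp [ginv, Fin.sum_univ_three, hsym r 1 0, hsym r 2 0, hsym r 2 1]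
  ring

lemma sqrt_bound {x S : ℝ} (h : x^2 ≤ S) : |x| ≤ Real.sqrt S := by
  rw [← Real.sqrt_sq_eq_abs]; exact Real.sqrt_le_sqrt h

lemma nonneg_facts (H : ℝ → Fin 3 → Fin 3 → ℝ) (r : ℝ) :
    0 ≤ 2*Real.exp (2*r) * (H r 0 2)^2 ∧ 0 ≤ 2*Real.exp (2*r) * (H r 1 2)^2 := by
  constructor <;> positivity

lemma bound00 (hsym : ∀ r i j, H r i j = H r j i) (r : ℝ) :
    |Real.exp (2*r) * H r 0 0| ≤ tensorNorm H r := by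
  unfold CuspODE.tensorNorm
  rw [inner_expand hsym r]
  apply sqrt_bound
  nlinarith [sq_nonneg (Real.exp (2*r) * H r 1 1), sq_nonneg (Real.exp (2*r) * H r 0 1),
    (nonneg_facts H r).1, (nonneg_facts H r).2, sq_nonneg (H r 2 2)]

lemma bound11 (hsym : ∀ r i j, H r i j = H r j i) (r : ℝ) :
    |Real.exp (2*r) * H r 1 1| ≤ tensorNorm H r := by
  unfold CuspODE.tensorNorm
  rw [inner_expand hsym r]
  apply sqrt_bound
  nlinarith [sq_nonneg (Real.exp (2*r) * H r 0 0), sq_nonneg (Real.exp (2*r) * H r 0 1),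
    (nonneg_facts H r).1, (nonneg_facts H r).2, sq_nonneg (H r 2 2)]

lemma bound01 (hsym : ∀ r i j, H r i j = H r j i) (r : ℝ) :
    |Real.exp (2*r) * H r 0 1| ≤ tensorNorm H r := by
  unfold CuspODE.tensorNorm
  rw [inner_expand hsym r]
  apply sqrt_bound
  nlinarith [sq_nonneg (Real.exp (2*r) * H r 0 0), sq_nonneg (Real.exp (2*r) * H r 1 1),
    (nonneg_facts H r).1, (nonneg_facts H r).2, sq_nonneg (H r 2 2),
    sq_nonneg (Real.exp (2*r) * H r 0 1)]

lemma bound02 (hsym : ∀ r i j, H r i j = H r j i) (r : ℝ) :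
    |Real.exp r * H r 0 2| ≤ tensorNorm H r := by
  unfold CuspODE.tensorNorm
  rw [inner_expand hsym r]
  apply sqrt_bound
  have hexp : (Real.exp r)^2 = Real.exp (2*r) := by
    rw [sq, ← Real.exp_add]; ring_nf
  have h1 : (Real.exp r * H r 0 2)^2 = Real.exp (2*r) * (H r 0 2)^2 := by
    rw [mul_pow, hexp]
  rw [h1]
  nlinarith [sq_nonneg (Real.exp (2*r) * H r 0 0), sq_nonneg (Real.exp (2*r) * H r 1 1),
    sq_nonneg (Real.exp (2*r) * H r 0 1), (nonneg_facts H r).1, (nonneg_facts H r).2,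
    sq_nonneg (H r 2 2)]

lemma bound12 (hsym : ∀ r i j, H r i j = H r j i) (r : ℝ) :
    |Real.exp r * H r 1 2| ≤ tensorNorm H r := by
  unfold CuspODE.tensorNorm
  rw [inner_expand hsym r]
  apply sqrt_bound
  have hexp : (Real.exp r)^2 = Real.exp (2*r) := by
    rw [sq, ← Real.exp_add]; ring_nf
  have h1 : (Real.exp r * H r 1 2)^2 = Real.exp (2*r) * (H r 1 2)^2 := by
    rw [mul_pow, hexp]
  rw [h1]
  nlinarith [sq_nonneg (Real.exp (2*r) * H r 0 0), sq_nonneg (Real.exp (2*r) * H r 1 1),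
    sq_nonneg (Real.exp (2*r) * H r 0 1), (nonneg_facts H r).1, (nonneg_facts H r).2,
    sq_nonneg (H r 2 2)]

lemma bound22 (hsym : ∀ r i j, H r i j = H r j i) (r : ℝ) :
    |H r 2 2| ≤ tensorNorm H r := by
  unfold CuspODE.tensorNorm
  rw [inner_expand hsym r]
  apply sqrt_bound
  nlinarith [sq_nonneg (Real.exp (2*r) * H r 0 0), sq_nonneg (Real.exp (2*r) * H r 1 1),
    sq_nonneg (Real.exp (2*r) * H r 0 1), (nonneg_facts H r).1, (nonneg_facts H r).2]

lemma exp_shift (A B mu nu s r : ℝ) :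
    Real.exp (s*r) * (A * Real.exp (mu*r) + B * Real.exp (nu*r))
      = A * Real.exp ((mu+s)*r) + B * Real.exp ((nu+s)*r) := by
  rw [show (mu+s)*r = mu*r + s*r by ring, show (nu+s)*r = nu*r + s*r by ring,
    Real.exp_add, Real.exp_add]
  ring

end Bounds


open CuspODE

/-- On the two-sided infinite hyperbolic cusp `T² × ℝ` with metric
`g = e^{-2r} g_Flat + dr²`, a `C²` symmetric `(0,2)`-tensor field `h` depending only on `r`
(components `H` in cusp coordinates) which solves `(1/2) Δ_L h + 2h = 0` and satisfies
`|h|(r) ≤ C (e^{-λr} + e^{λr})` for some `λ ∈ (0,1)` is a trivial Einstein variation, i.e.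
`h = e^{-2r} u_{ij} dx^i dx^j` with constants `u_{ij}` satisfying `u₁₁ + u₂₂ = 0`; moreover,
if `|h|(r) ≤ C e^{-λr}` for all `r`, or `|h|(r) ≤ C e^{λr}` for all `r`, then `h = 0`. -/
theorem stmt_12 (C lam : ℝ) (hC : 0 < C) (hlam : lam ∈ Set.Ioo (0 : ℝ) 1)
    (H : ℝ → Fin 3 → Fin 3 → ℝ)
    (hHsymm : ∀ r i j, H r i j = H r j i)
    (hHsmooth : ∀ i j, ContDiff ℝ 2 fun r => H r i j)
    (heq : ∀ (r : ℝ) (i j : Fin 3), (1 / 2) * lichLap H r i j + 2 * H r i j = 0)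
    (hbound : ∀ r : ℝ, tensorNorm H r ≤ C * (Real.exp (-(lam * r)) + Real.exp (lam * r))) :
    (∃ u : Fin 2 → Fin 2 → ℝ, u 0 0 + u 1 1 = 0 ∧
      (∀ (r : ℝ) (i j : Fin 2), H r i.castSucc j.castSucc = Real.exp (-(2 * r)) * u i j) ∧
      (∀ (r : ℝ) (i : Fin 3), H r i 2 = 0 ∧ H r 2 i = 0)) ∧
    ((∀ r : ℝ, tensorNorm H r ≤ C * Real.exp (-(lam * r))) → ∀ r i j, H r i j = 0) ∧
    ((∀ r : ℝ, tensorNorm H r ≤ C * Real.exp (lam * r)) → ∀ r i j, H r i j = 0) := by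
  obtain ⟨hl0, hl1⟩ := hlam
  have h5 : Real.sqrt 5 ^ 2 = 5 := Real.sq_sqrt (by norm_num)
  have h5a : 2 < Real.sqrt 5 := by nlinarith [Real.sqrt_nonneg 5]
  have h5b : Real.sqrt 5 < 3 := by nlinarith [Real.sqrt_nonneg 5]
  -- component ODEs
  have e00 : ∀ r, deriv (deriv (fun s => H s 0 0)) r
      = -2 * deriv (fun s => H s 0 0) r + 2 * (H r 0 0 + H r 1 1) := by
    intro r; have h := heq r 0 0; rw [lich00 hHsmooth r] at h; linarith
  have e11 : ∀ r, deriv (deriv (fun s => H s 1 1)) r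
      = -2 * deriv (fun s => H s 1 1) r + 2 * (H r 0 0 + H r 1 1) := by
    intro r; have h := heq r 1 1; rw [lich11 hHsmooth r] at h; linarith
  have e01 : ∀ r, deriv (deriv (fun s => H s 0 1)) r = -2 * deriv (fun s => H s 0 1) r := by
    intro r; have h := heq r 0 1; rw [lich01 hHsmooth hHsymm r] at h; linarith
  have e02 : ∀ r, deriv (deriv (fun s => H s 0 2)) r = 4 * H r 0 2 := by
    intro r; have h := heq r 0 2; rw [lich02 hHsmooth hHsymm r] at h; linarith
  have e12 : ∀ r, deriv (deriv (fun s => H s 1 2)) r = 4 * H r 1 2 := by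
    intro r; have h := heq r 1 2; rw [lich12 hHsmooth hHsymm r] at h; linarith
  have e22 : ∀ r, deriv (deriv (fun s => H s 2 2)) r
      = 2 * deriv (fun s => H s 2 2) r + 4 * H r 2 2 := by
    intro r; have h := heq r 2 2; rw [lich22 hHsmooth hHsymm r] at h; linarith
  -- p = trace part
  have hdp_eq : deriv (fun s => H s 0 0 + H s 1 1)
      = fun x => deriv (fun s => H s 0 0) x + deriv (fun s => H s 1 1) x :=
    funext fun x => deriv_fun_add (diffH hHsmooth 0 0 x) (diffH hHsmooth 1 1 x)
  have hp_diff : Differentiable ℝ (fun s => H s 0 0 + H s 1 1) :=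
    (diffH hHsmooth 0 0).add (diffH hHsmooth 1 1)
  have hp_diff' : Differentiable ℝ (deriv (fun s => H s 0 0 + H s 1 1)) := by
    rw [hdp_eq]; exact (diffDerivH hHsmooth 0 0).add (diffDerivH hHsmooth 1 1)
  have hodep : ∀ r, deriv (deriv (fun s => H s 0 0 + H s 1 1)) r
      = ((-1 + Real.sqrt 5) + (-1 - Real.sqrt 5)) * deriv (fun s => H s 0 0 + H s 1 1) r
        - ((-1 + Real.sqrt 5) * (-1 - Real.sqrt 5)) * (H r 0 0 + H r 1 1) := by
    intro r
    have hS : ((-1 + Real.sqrt 5) + (-1 - Real.sqrt 5)) = -2 := by ring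
    have hP : ((-1 + Real.sqrt 5) * (-1 - Real.sqrt 5)) = -4 := by nlinarith
    have hd1 : deriv (fun s => H s 0 0 + H s 1 1) r
        = deriv (fun s => H s 0 0) r + deriv (fun s => H s 1 1) r :=
      deriv_fun_add (diffH hHsmooth 0 0 r) (diffH hHsmooth 1 1 r)
    have hd2 : deriv (deriv (fun s => H s 0 0 + H s 1 1)) r
        = deriv (deriv fun s => H s 0 0) r + deriv (deriv fun s => H s 1 1) r := by
      rw [hdp_eq]
      exact deriv_fun_add (diffDerivH hHsmooth 0 0 r) (diffDerivH hHsmooth 1 1 r)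
    rw [hS, hP, hd2, hd1]
    linarith [e00 r, e11 r]
  obtain ⟨Ap, Bp, hp⟩ := ode_second hp_diff hp_diff' (-1 + Real.sqrt 5) (-1 - Real.sqrt 5)
    (by intro hh; nlinarith) hodep
  have hbp : ∀ r, |Ap * Real.exp (((-1 + Real.sqrt 5) + 2) * r)
      + Bp * Real.exp (((-1 - Real.sqrt 5) + 2) * r)|
      ≤ (2 * C) * (Real.exp (-(lam * r)) + Real.exp (lam * r)) := by
    intro r
    have step : |Real.exp (2 * r) * (H r 0 0 + H r 1 1)|
        ≤ (2 * C) * (Real.exp (-(lam * r)) + Real.exp (lam * r)) := by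
      have h1 : |Real.exp (2 * r) * (H r 0 0 + H r 1 1)|
          ≤ |Real.exp (2 * r) * H r 0 0| + |Real.exp (2 * r) * H r 1 1| := by
        rw [mul_add]; exact abs_add_le _ _
      have h2 := bound00 hHsymm r; have h3 := bound11 hHsymm r; have h4 := hbound r
      linarith
    rw [← exp_shift Ap Bp _ _ 2 r, ← hp r]
    simpa using step
  have hAp : Ap = 0 := by
    refine kill_top (by nlinarith) (by nlinarith) hl0 hbp
  have hBp : Bp = 0 := by
    refine kill_bot (by nlinarith) (by nlinarith) hl0 hbp
  have hp0 : ∀ r, H r 0 0 + H r 1 1 = 0 := by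
    intro r; have := hp r; rw [hAp, hBp] at this; simpa using this
  -- q = difference
  have hdq_eq : deriv (fun s => H s 0 0 - H s 1 1)
      = fun x => deriv (fun s => H s 0 0) x - deriv (fun s => H s 1 1) x :=
    funext fun x => deriv_fun_sub (diffH hHsmooth 0 0 x) (diffH hHsmooth 1 1 x)
  have hq_diff : Differentiable ℝ (fun s => H s 0 0 - H s 1 1) :=
    (diffH hHsmooth 0 0).sub (diffH hHsmooth 1 1)
  have hq_diff' : Differentiable ℝ (deriv (fun s => H s 0 0 - H s 1 1)) := by
    rw [hdq_eq]; exact (diffDerivH hHsmooth 0 0).sub (diffDerivH hHsmooth 1 1)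
  have hodeq : ∀ r, deriv (deriv (fun s => H s 0 0 - H s 1 1)) r
      = ((0 : ℝ) + (-2)) * deriv (fun s => H s 0 0 - H s 1 1) r
        - ((0 : ℝ) * (-2)) * (H r 0 0 - H r 1 1) := by
    intro r
    have hd1 : deriv (fun s => H s 0 0 - H s 1 1) r
        = deriv (fun s => H s 0 0) r - deriv (fun s => H s 1 1) r :=
      deriv_fun_sub (diffH hHsmooth 0 0 r) (diffH hHsmooth 1 1 r)
    have hd2 : deriv (deriv (fun s => H s 0 0 - H s 1 1)) r
        = deriv (deriv fun s => H s 0 0) r - deriv (deriv fun s => H s 1 1) r := by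
      rw [hdq_eq]
      exact deriv_fun_sub (diffDerivH hHsmooth 0 0 r) (diffDerivH hHsmooth 1 1 r)
    rw [hd2, hd1]
    linarith [e00 r, e11 r]
  obtain ⟨Aq, Bq, hq⟩ := ode_second hq_diff hq_diff' (0 : ℝ) (-2) (by norm_num) hodeq
  have hbq : ∀ r, |Aq * Real.exp (((0 : ℝ) + 2) * r) + Bq * Real.exp (((-2 : ℝ) + 2) * r)|
      ≤ (2 * C) * (Real.exp (-(lam * r)) + Real.exp (lam * r)) := by
    intro r
    have step : |Real.exp (2 * r) * (H r 0 0 - H r 1 1)|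
        ≤ (2 * C) * (Real.exp (-(lam * r)) + Real.exp (lam * r)) := by
      have h1 : |Real.exp (2 * r) * (H r 0 0 - H r 1 1)|
          ≤ |Real.exp (2 * r) * H r 0 0| + |Real.exp (2 * r) * H r 1 1| := by
        rw [mul_sub]; exact abs_sub _ _
      have h2 := bound00 hHsymm r; have h3 := bound11 hHsymm r; have h4 := hbound r
      linarith
    rw [← exp_shift Aq Bq _ _ 2 r, ← hq r]
    simpa using step
  have hAq : Aq = 0 := kill_top (by norm_num) (by linarith) hl0 hbq
  have hq' : ∀ r, H r 0 0 - H r 1 1 = Bq * Real.exp (-2 * r) := by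
    intro r; have := hq r; rw [hAq] at this; simpa using this
  -- c = off-diagonal
  have hodec : ∀ r, deriv (deriv (fun s => H s 0 1)) r
      = ((0 : ℝ) + (-2)) * deriv (fun s => H s 0 1) r - ((0 : ℝ) * (-2)) * H r 0 1 := by
    intro r; rw [e01 r]; ring
  obtain ⟨Ac, Bc, hc⟩ := ode_second (diffH hHsmooth 0 1) (diffDerivH hHsmooth 0 1)
    (0 : ℝ) (-2) (by norm_num) hodec
  have hbc : ∀ r, |Ac * Real.exp (((0 : ℝ) + 2) * r) + Bc * Real.exp (((-2 : ℝ) + 2) * r)|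
      ≤ C * (Real.exp (-(lam * r)) + Real.exp (lam * r)) := by
    intro r
    have step : |Real.exp (2 * r) * H r 0 1| ≤ C * (Real.exp (-(lam * r)) + Real.exp (lam * r)) :=
      le_trans (bound01 hHsymm r) (hbound r)
    rw [← exp_shift Ac Bc _ _ 2 r, ← hc r]
    simpa using step
  have hAc : Ac = 0 := kill_top (by norm_num) (by linarith) hl0 hbc
  have hc' : ∀ r, H r 0 1 = Bc * Real.exp (-2 * r) := by
    intro r; have := hc r; rw [hAc] at this; simpa using this
  -- d = (0,2)
  have hoded : ∀ r, deriv (deriv (fun s => H s 0 2)) r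
      = ((2 : ℝ) + (-2)) * deriv (fun s => H s 0 2) r - ((2 : ℝ) * (-2)) * H r 0 2 := by
    intro r; rw [e02 r]; ring
  obtain ⟨Ad, Bd, hd⟩ := ode_second (diffH hHsmooth 0 2) (diffDerivH hHsmooth 0 2)
    (2 : ℝ) (-2) (by norm_num) hoded
  have hbd : ∀ r, |Ad * Real.exp (((2 : ℝ) + 1) * r) + Bd * Real.exp (((-2 : ℝ) + 1) * r)|
      ≤ C * (Real.exp (-(lam * r)) + Real.exp (lam * r)) := by
    intro r
    have step : |Real.exp (1 * r) * H r 0 2| ≤ C * (Real.exp (-(lam * r)) + Real.exp (lam * r)) := by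
      rw [one_mul]
      exact le_trans (bound02 hHsymm r) (hbound r)
    rw [← exp_shift Ad Bd _ _ 1 r, ← hd r]
    simpa using step
  have hAd : Ad = 0 := kill_top (by norm_num) (by linarith) hl0 hbd
  have hBd : Bd = 0 := kill_bot (by norm_num) (by linarith) hl0 hbd
  have hd0 : ∀ r, H r 0 2 = 0 := by
    intro r; have := hd r; rw [hAd, hBd] at this; simpa using this
  -- e = (1,2)
  have hodee : ∀ r, deriv (deriv (fun s => H s 1 2)) r
      = ((2 : ℝ) + (-2)) * deriv (fun s => H s 1 2) r - ((2 : ℝ) * (-2)) * H r 1 2 := by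
    intro r; rw [e12 r]; ring
  obtain ⟨Ae, Be, he⟩ := ode_second (diffH hHsmooth 1 2) (diffDerivH hHsmooth 1 2)
    (2 : ℝ) (-2) (by norm_num) hodee
  have hbe : ∀ r, |Ae * Real.exp (((2 : ℝ) + 1) * r) + Be * Real.exp (((-2 : ℝ) + 1) * r)|
      ≤ C * (Real.exp (-(lam * r)) + Real.exp (lam * r)) := by
    intro r
    have step : |Real.exp (1 * r) * H r 1 2| ≤ C * (Real.exp (-(lam * r)) + Real.exp (lam * r)) := by
      rw [one_mul]
      exact le_trans (bound12 hHsymm r) (hbound r)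
    rw [← exp_shift Ae Be _ _ 1 r, ← he r]
    simpa using step
  have hAe : Ae = 0 := kill_top (by norm_num) (by linarith) hl0 hbe
  have hBe : Be = 0 := kill_bot (by norm_num) (by linarith) hl0 hbe
  have he0 : ∀ r, H r 1 2 = 0 := by
    intro r; have := he r; rw [hAe, hBe] at this; simpa using this
  -- f = (2,2)
  have hodef : ∀ r, deriv (deriv (fun s => H s 2 2)) r
      = ((1 + Real.sqrt 5) + (1 - Real.sqrt 5)) * deriv (fun s => H s 2 2) r
        - ((1 + Real.sqrt 5) * (1 - Real.sqrt 5)) * H r 2 2 := by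
    intro r
    have hS : ((1 + Real.sqrt 5) + (1 - Real.sqrt 5)) = 2 := by ring
    have hP : ((1 + Real.sqrt 5) * (1 - Real.sqrt 5)) = -4 := by nlinarith
    rw [hS, hP, e22 r]; ring
  obtain ⟨Af, Bf, hf⟩ := ode_second (diffH hHsmooth 2 2) (diffDerivH hHsmooth 2 2)
    (1 + Real.sqrt 5) (1 - Real.sqrt 5) (by intro hh; nlinarith) hodef
  have hbf : ∀ r, |Af * Real.exp ((1 + Real.sqrt 5) * r) + Bf * Real.exp ((1 - Real.sqrt 5) * r)|
      ≤ C * (Real.exp (-(lam * r)) + Real.exp (lam * r)) := by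
    intro r
    rw [← hf r]
    exact le_trans (bound22 hHsymm r) (hbound r)
  have hAf : Af = 0 := kill_top (by nlinarith) (by nlinarith) hl0 hbf
  have hBf : Bf = 0 := kill_bot (by nlinarith) (by nlinarith) hl0 hbf
  have hf0 : ∀ r, H r 2 2 = 0 := by
    intro r; have := hf r; rw [hAf, hBf] at this; simpa using this
  -- explicit component formulas
  have hexp2 : ∀ r : ℝ, Real.exp (-2 * r) = Real.exp (-(2 * r)) := by
    intro r; ring_nf
  have comp00 : ∀ r, H r 0 0 = Real.exp (-(2 * r)) * (Bq / 2) := by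
    intro r; have h1 := hp0 r; have h2 := hq' r; rw [hexp2 r] at h2; linarith
  have comp11 : ∀ r, H r 1 1 = Real.exp (-(2 * r)) * (-(Bq / 2)) := by
    intro r; have h1 := hp0 r; have h2 := hq' r; rw [hexp2 r] at h2; linarith
  have comp01 : ∀ r, H r 0 1 = Real.exp (-(2 * r)) * Bc := by
    intro r; have h2 := hc' r; rw [hexp2 r] at h2; linarith
  refine ⟨⟨![![Bq / 2, Bc], ![Bc, -(Bq / 2)]], ?_, ?_, ?_⟩, ?_, ?_⟩
  · simp
  · intro r i j
    fin_cases i <;> fin_cases j <;>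
      simp [comp00 r, comp11 r, comp01 r, hHsymm r 1 0]
  · intro r i
    fin_cases i
    · exact ⟨hd0 r, (hHsymm r 2 0).trans (hd0 r)⟩
    · exact ⟨he0 r, (hHsymm r 2 1).trans (he0 r)⟩
    · exact ⟨hf0 r, hf0 r⟩
  · -- decaying bound kills everything
    intro hb2
    have kq : (Bq / 2 : ℝ) = 0 := by
      apply const_kill_top hl0 (C := C)
      intro r
      have hval : Real.exp (2 * r) * H r 0 0 = Bq / 2 := by
        rw [comp00 r, ← mul_assoc, ← Real.exp_add]
        norm_num
      calc |Bq / 2| = |Real.exp (2 * r) * H r 0 0| := by rw [hval]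
        _ ≤ tensorNorm H r := bound00 hHsymm r
        _ ≤ C * Real.exp (-(lam * r)) := hb2 r
    have kc : (Bc : ℝ) = 0 := by
      apply const_kill_top hl0 (C := C)
      intro r
      have hval : Real.exp (2 * r) * H r 0 1 = Bc := by
        rw [comp01 r, ← mul_assoc, ← Real.exp_add]
        norm_num
      calc |Bc| = |Real.exp (2 * r) * H r 0 1| := by rw [hval]
        _ ≤ tensorNorm H r := bound01 hHsymm r
        _ ≤ C * Real.exp (-(lam * r)) := hb2 r
    intro r i j
    fin_cases i <;> fin_cases j <;>
      simp [comp00 r, comp11 r, comp01 r, hd0 r, he0 r, hf0 r,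
        hHsymm r 1 0, hHsymm r 2 0, hHsymm r 2 1, kq, kc]
  · -- growing bound kills everything
    intro hb2
    have kq : (Bq / 2 : ℝ) = 0 := by
      apply const_kill_bot hl0 (C := C)
      intro r
      have hval : Real.exp (2 * r) * H r 0 0 = Bq / 2 := by
        rw [comp00 r, ← mul_assoc, ← Real.exp_add]
        norm_num
      calc |Bq / 2| = |Real.exp (2 * r) * H r 0 0| := by rw [hval]
        _ ≤ tensorNorm H r := bound00 hHsymm r
        _ ≤ C * Real.exp (lam * r) := hb2 r
    have kc : (Bc : ℝ) = 0 := by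
      apply const_kill_bot hl0 (C := C)
      intro r
      have hval : Real.exp (2 * r) * H r 0 1 = Bc := by
        rw [comp01 r, ← mul_assoc, ← Real.exp_add]
        norm_num
      calc |Bc| = |Real.exp (2 * r) * H r 0 1| := by rw [hval]
        _ ≤ tensorNorm H r := bound01 hHsymm r
        _ ≤ C * Real.exp (lam * r) := hb2 r
    intro r i j
    fin_cases i <;> fin_cases j <;>
      simp [comp00 r, comp11 r, comp01 r, hd0 r, he0 r, hf0 r,
        hHsymm r 1 0, hHsymm r 2 0, hHsymm r 2 1, kq, kc]
end
end
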